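/- arXiv:2405.18313 — 4 statements merged into one kernel-verified Lean document; each statement's English description precedes it below -/
import Mathlib

section
/- Let k be an algebraically closed field of characteristic 0, V a finite-dimensional k-vector space, and s an endomorphism of V. Then there exists a nondegenerate symmetric bilinear form B on V such that s is self-adjoint with respect to B, i.e., B(s v, w) = B(v, s w) for all v, w in V. -/
open Polynomial

section Aux

variable {k : Type*} [Field k]

noncomputable instance AdjoinRoot.instModulePoly (q : k[X]) : Module k[X] (AdjoinRoot q) :=
  inferInstanceAs (Module k[X] (k[X] ⧸ (Ideal.span {q} : Ideal k[X])))

instance AdjoinRoot.instTowerPoly (q : k[X]) : IsScalarTower k k[X] (AdjoinRoot q) :=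
  inferInstanceAs (IsScalarTower k k[X] (k[X] ⧸ (Ideal.span {q} : Ideal k[X])))

lemma adjoinRoot_X_smul (q : k[X]) (v : AdjoinRoot q) :
    (X : k[X]) • v = AdjoinRoot.mk q X * v := by
  induction v using AdjoinRoot.induction_on with
  | ih f => rfl

/-- Core lemma: on `AdjoinRoot q` for monic `q`, multiplication by `X` is self-adjoint for a
nondegenerate symmetric bilinear form (the "top coefficient of the product" form). -/
lemma adjoinRoot_core (q : k[X]) (hq : q.Monic) :
    ∃ B : LinearMap.BilinForm k (AdjoinRoot q), B.Nondegenerate ∧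
      (∀ v w, B v w = B w v) ∧
      (∀ v w : AdjoinRoot q, B ((X : k[X]) • v) w = B v ((X : k[X]) • w)) := by
  by_cases hd : q.natDegree = 0
  · -- q = 1, quotient is trivial
    have hq1 : q = 1 := hq.natDegree_eq_zero.mp hd
    have hz : ∀ z : AdjoinRoot q, z = 0 := by
      intro z
      induction z using AdjoinRoot.induction_on with
      | ih f => rw [AdjoinRoot.mk_eq_zero, hq1]; exact one_dvd f
    exact ⟨0, ⟨fun v _ => hz v, fun v _ => hz v⟩, fun v w => rfl, fun v w => rfl⟩
  · set d := q.natDegree with hdd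
    have hq0 : q ≠ 0 := hq.ne_zero
    set lam : AdjoinRoot q →ₗ[k] k :=
      (Polynomial.lcoeff k (d - 1)).comp (AdjoinRoot.modByMonicHom hq) with hlam
    set B : LinearMap.BilinForm k (AdjoinRoot q) :=
      (LinearMap.mul k (AdjoinRoot q)).compr₂ lam with hB
    have hBapp : ∀ v w : AdjoinRoot q, B v w = lam (v * w) := fun v w => rfl
    refine ⟨B, ?_, ?_, ?_⟩
    · -- nondegenerate
      suffices hL : LinearMap.SeparatingLeft B from
        ⟨hL, fun w hw => hL w fun v => by rw [hBapp, mul_comm, ← hBapp]; exact hw v⟩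
      intro v hv
      by_contra hv0
      obtain ⟨F₀, rfl⟩ := AdjoinRoot.mk_surjective v
      set F : k[X] := F₀ %ₘ q with hF
      have hmkF : AdjoinRoot.mk q F = AdjoinRoot.mk q F₀ := by
        rw [AdjoinRoot.mk_eq_mk]
        have : F - F₀ = -(q * (F₀ /ₘ q)) := by
          rw [hF, modByMonic_eq_sub_mul_div _ q]; ring
        rw [this]
        exact dvd_neg.mpr (dvd_mul_right q _)
      have hF0 : F ≠ 0 := by
        intro h
        apply hv0
        rw [← hmkF, h, map_zero]
      have hdegF : F.degree < q.degree := degree_modByMonic_lt F₀ hq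
      have hm : F.natDegree < d := natDegree_lt_natDegree hF0 hdegF
      set m := F.natDegree with hmm
      have key := hv (AdjoinRoot.mk q (X ^ (d - 1 - m)))
      rw [hBapp] at key
      have hmul : (AdjoinRoot.mk q F₀) * AdjoinRoot.mk q (X ^ (d - 1 - m)) =
          AdjoinRoot.mk q (F * X ^ (d - 1 - m)) := by
        rw [← hmkF, ← map_mul]
      rw [hmul] at key
      set G : k[X] := F * X ^ (d - 1 - m) with hG
      have hG0 : G ≠ 0 := mul_ne_zero hF0 (pow_ne_zero _ X_ne_zero)
      have hGdeg : G.natDegree = d - 1 := by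
        rw [hG, natDegree_mul hF0 (pow_ne_zero _ X_ne_zero), natDegree_X_pow]
        omega
      have hGlt : G.degree < q.degree := by
        rw [degree_eq_natDegree hG0, degree_eq_natDegree hq0, hGdeg]
        exact_mod_cast Nat.sub_lt (Nat.pos_of_ne_zero hd) one_pos
      have hlamG : lam (AdjoinRoot.mk q G) = G.coeff (d - 1) := by
        rw [hlam]
        simp only [LinearMap.comp_apply, AdjoinRoot.modByMonicHom_mk]
        rw [(modByMonic_eq_self_iff hq).mpr hGlt]
        rfl
      rw [hlamG] at key
      have hco : G.coeff (d - 1) = G.leadingCoeff := by rw [leadingCoeff, hGdeg]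
      rw [hco] at key
      exact leadingCoeff_ne_zero.mpr hG0 key
    · intro v w; rw [hBapp, hBapp, mul_comm]
    · intro v w
      rw [hBapp, hBapp, adjoinRoot_X_smul, adjoinRoot_X_smul, mul_assoc,
        mul_left_comm]

/-- Combination over a finite product. -/
lemma pi_core {ι : Type*} [Fintype ι] {Q : ι → Type*} [∀ i, AddCommGroup (Q i)]
    [∀ i, Module k (Q i)] (t : ∀ i, Q i →ₗ[k] Q i)
    (h : ∀ i, ∃ B : LinearMap.BilinForm k (Q i), B.Nondegenerate ∧
      (∀ v w, B v w = B w v) ∧ (∀ v w, B (t i v) w = B v (t i w))) :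
    ∃ B : LinearMap.BilinForm k (∀ i, Q i), B.Nondegenerate ∧
      (∀ v w, B v w = B w v) ∧
      (∀ v w, B (fun i => t i (v i)) w = B v (fun i => t i (w i))) := by
  classical
  choose B h1 h2 h3 using h
  set Btot : LinearMap.BilinForm k (∀ i, Q i) :=
    ∑ i, (B i).compl₁₂ (LinearMap.proj i) (LinearMap.proj i) with hBtot
  have happ : ∀ v w, Btot v w = ∑ i, B i (v i) (w i) := by
    intro v w
    simp [hBtot, LinearMap.sum_apply]
  refine ⟨Btot, ?_, ?_, ?_⟩
  · suffices hL : LinearMap.SeparatingLeft Btot from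
      ⟨hL, fun w hw => hL w fun v => by
        have := hw v
        simp only [happ] at this ⊢
        rw [← this]
        exact Finset.sum_congr rfl fun i _ => h2 i _ _⟩
    intro v hv
    funext i
    apply (h1 i).1
    intro w
    have := hv (Pi.single i w)
    rw [happ] at this
    rw [Finset.sum_eq_single i] at this
    · simpa using this
    · intro j _ hj
      rw [Pi.single_eq_of_ne hj, map_zero]
    · intro hi; exact absurd (Finset.mem_univ i) hi
  · intro v w; rw [happ, happ]; exact Finset.sum_congr rfl fun i _ => h2 i _ _
  · intro v w; rw [happ, happ]
    refine Finset.sum_congr rfl fun i _ => ?_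
    simpa using h3 i (v i) (w i)

end Aux

universe u v
variable {k : Type u} {V : Type v} [Field k] [AddCommGroup V] [Module k V] [FiniteDimensional k V]

theorem main_aux (s : V →ₗ[k] V) :
    ∃ B : LinearMap.BilinForm k V,
      B.Nondegenerate ∧ (∀ v w : V, B v w = B w v) ∧
      (∀ v w : V, B (s v) w = B v (s w)) := by
  classical
  set M := Module.AEval' s with hM
  haveI : Module.Finite k[X] M := inferInstance
  have htor : Module.IsTorsion k[X] M := by
    intro x
    refine ⟨⟨minpoly k s, mem_nonZeroDivisors_of_ne_zero (minpoly.ne_zero_of_finite k s)⟩, ?_⟩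
    apply (Module.AEval'.of s).symm.injective
    rw [Submonoid.mk_smul, Module.AEval.of_symm_smul]
    simp [minpoly.aeval]
  let eU : ULift.{u} M ≃ₗ[k[X]] M := ULift.moduleEquiv
  haveI : Module.Finite k[X] (ULift.{u} M) := Module.Finite.equiv eU.symm
  have htorU : Module.IsTorsion k[X] (ULift.{u} M) := by
    intro x
    obtain ⟨a, ha⟩ := @htor (eU x)
    refine ⟨a, eU.injective ?_⟩
    rw [Submonoid.mk_smul] at ha ⊢
    rw [map_smul, map_zero]
    exact ha
  obtain ⟨ι, fι, p, hp, e, ⟨E⟩⟩ := Module.equiv_directSum_of_isTorsion htorU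
  haveI := fι
  set q : ι → k[X] := fun i => (normalize (p i)) ^ (e i) with hq
  have hqmonic : ∀ i, (q i).Monic := fun i => (monic_normalize (hp i).ne_zero).pow _
  have hspan : ∀ i, (Submodule.span k[X] {p i ^ e i}) = (Submodule.span k[X] {q i}) := by
    intro i
    exact Ideal.span_singleton_eq_span_singleton.mpr (associated_normalize (p i)).pow_pow
  let ceq : ∀ i, (k[X] ⧸ (Submodule.span k[X] {p i ^ e i})) ≃ₗ[k[X]] AdjoinRoot (q i) :=
    fun i => (Submodule.quotEquivOfEq _ _ (hspan i) :
      (k[X] ⧸ (Submodule.span k[X] {p i ^ e i})) ≃ₗ[k[X]] AdjoinRoot (q i))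
  let E2 : ULift.{u} M ≃ₗ[k[X]] DirectSum ι (fun i => AdjoinRoot (q i)) :=
    E.trans (DFinsupp.mapRange.linearEquiv ceq)
  let E3 : ULift.{u} M ≃ₗ[k[X]] ∀ i, AdjoinRoot (q i) :=
    E2.trans (DirectSum.linearEquivFunOnFintype k[X] ι _)
  let eAll : V ≃ₗ[k] (∀ i, AdjoinRoot (q i)) :=
    (Module.AEval'.of s).trans ((eU.symm.trans E3).restrictScalars k)
  have hkey : ∀ v : V, eAll (s v) = fun i => (X : k[X]) • (eAll v i) := by
    intro v
    have h1 : eAll (s v) = (eU.symm.trans E3) ((X : k[X]) • (Module.AEval'.of s v)) := by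
      rw [Module.AEval'.X_smul_of]; rfl
    rw [h1, map_smul]
    rfl
  let t : ∀ i, AdjoinRoot (q i) →ₗ[k] AdjoinRoot (q i) :=
    fun i => (LinearMap.lsmul k[X] (AdjoinRoot (q i)) X).restrictScalars k
  obtain ⟨B0, hB1, hB2, hB3⟩ := pi_core t (fun i => adjoinRoot_core (q i) (hqmonic i))
  have h3' : ∀ (x y : ∀ i, AdjoinRoot (q i)),
      B0 (fun i => (X : k[X]) • x i) y = B0 x (fun i => (X : k[X]) • y i) :=
    fun x y => hB3 x y
  refine ⟨B0.compl₁₂ eAll.toLinearMap eAll.toLinearMap, ?_, ?_, ?_⟩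
  · suffices hL : LinearMap.SeparatingLeft (B0.compl₁₂ eAll.toLinearMap eAll.toLinearMap) from
      ⟨hL, fun w hw => hL w fun v => by
        have := hw v
        simp only [LinearMap.compl₁₂_apply] at this ⊢
        rw [hB2]
        exact this⟩
    intro v hv
    have hz : ∀ w', B0 (eAll v) w' = 0 := by
      intro w'
      have := hv (eAll.symm w')
      simpa [LinearMap.compl₁₂_apply] using this
    have : eAll v = 0 := hB1.1 _ hz
    simpa using congrArg eAll.symm this
  · intro v w
    simp only [LinearMap.compl₁₂_apply, LinearEquiv.coe_coe]
    exact hB2 _ _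
  · intro v w
    simp only [LinearMap.compl₁₂_apply, LinearEquiv.coe_coe]
    rw [hkey v, hkey w]
    exact h3' _ _


/-- Let `k` be an algebraically closed field of characteristic 0, `V` a finite-dimensional
`k`-vector space and `s` an endomorphism of `V`.  Then there exists a nondegenerate symmetric
bilinear form `B` on `V` such that `s` is self-adjoint with respect to `B`. -/
theorem exists_nondegenerate_symm_bilin_selfadjoint
    {k V : Type*} [Field k] [IsAlgClosed k] [CharZero k]
    [AddCommGroup V] [Module k V] [FiniteDimensional k V]
    (s : V →ₗ[k] V) :
    ∃ B : LinearMap.BilinForm k V,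
      B.Nondegenerate ∧ (∀ v w : V, B v w = B w v) ∧
      (∀ v w : V, B (s v) w = B v (s w)) := by
  exact main_aux s
end

section
/- Every square matrix over an algebraically closed field of characteristic 0 is conjugate (similar) to a symmetric matrix. -/
open Module

namespace SymmConjAux

variable {k : Type*} [Field k]
variable {V : Type*} [AddCommGroup V] [Module k V]

/-- `f` is self-adjoint for the symmetric nondegenerate bilinear form `B`. -/
def Good (f : Module.End k V) (B : LinearMap.BilinForm k V) : Prop :=
  B.IsSymm ∧ B.Nondegenerate ∧ ∀ x y, B (f x) y = B x (f y)

lemma good_zero [Subsingleton V] (f : Module.End k V) : Good f (0 : LinearMap.BilinForm k V) := by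
  refine ⟨⟨fun x y => by simp⟩, ⟨fun x _ => Subsingleton.elim _ _, fun x _ => Subsingleton.elim _ _⟩,
    fun x y => by simp⟩

lemma nondeg_of_symm {B : LinearMap.BilinForm k V} (hs : B.IsSymm)
    (h : ∀ x, (∀ y, B x y = 0) → x = 0) : B.Nondegenerate :=
  ⟨h, fun y hy => h y fun x => by rw [hs.eq]; exact hy x⟩

section combine

variable {p q : Submodule k V} {f : Module.End k V}

lemma proj_comm_left (h : IsCompl p q) (hp : ∀ x ∈ p, f x ∈ p) (hq : ∀ x ∈ q, f x ∈ q) (x : V) :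
    p.linearProjOfIsCompl q h (f x) = (f.restrict hp) (p.linearProjOfIsCompl q h x) := by
  have hx : ((p.linearProjOfIsCompl q h x : V) + (q.linearProjOfIsCompl p h.symm x : V)) = x :=
    Submodule.projection_add_projection_eq_self h x
  have h1 : f x = f (p.linearProjOfIsCompl q h x : V) + f (q.linearProjOfIsCompl p h.symm x : V) := by
    rw [← map_add, hx]
  have h2 : p.linearProjOfIsCompl q h (f (p.linearProjOfIsCompl q h x : V)) =
      (⟨f (p.linearProjOfIsCompl q h x : V), hp _ (p.linearProjOfIsCompl q h x).2⟩ : p) :=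
    Submodule.linearProjOfIsCompl_apply_left h ⟨_, hp _ (p.linearProjOfIsCompl q h x).2⟩
  have h3 : p.linearProjOfIsCompl q h (f (q.linearProjOfIsCompl p h.symm x : V)) = 0 :=
    Submodule.projectionOnto_apply_of_mem_right h (hq _ (q.linearProjOfIsCompl p h.symm x).2)
  rw [h1, map_add, h2, h3, add_zero]
  ext
  simp [LinearMap.restrict_apply]

lemma combine (h : IsCompl p q) (hp : ∀ x ∈ p, f x ∈ p) (hq : ∀ x ∈ q, f x ∈ q)
    {Bp : LinearMap.BilinForm k p} {Bq : LinearMap.BilinForm k q}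
    (Hp : Good (f.restrict hp) Bp) (Hq : Good (f.restrict hq) Bq) :
    ∃ B : LinearMap.BilinForm k V, Good f B := by
  refine ⟨Bp.compl₁₂ (p.linearProjOfIsCompl q h) (p.linearProjOfIsCompl q h)
    + Bq.compl₁₂ (q.linearProjOfIsCompl p h.symm) (q.linearProjOfIsCompl p h.symm), ?_, ?_, ?_⟩
  · refine ⟨fun x y => ?_⟩
    simp only [LinearMap.add_apply, LinearMap.compl₁₂_apply, RingHom.id_apply]
    have e1 := (LinearMap.BilinForm.isSymm_iff.mp Hp.1).eq (p.linearProjOfIsCompl q h x) (p.linearProjOfIsCompl q h y)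
    have e2 := (LinearMap.BilinForm.isSymm_iff.mp Hq.1).eq (q.linearProjOfIsCompl p h.symm x) (q.linearProjOfIsCompl p h.symm y)
    simp only [RingHom.id_apply] at e1 e2
    rw [e1, e2]
  · refine ⟨fun x hx => ?_, fun x hx => ?_⟩
    have hxp : p.linearProjOfIsCompl q h x = 0 := by
      apply Hp.2.1.1
      intro u
      have := hx (u : V)
      simpa [Submodule.linearProjOfIsCompl, Submodule.linearProjOfIsCompl_apply_left h u,
        Submodule.projectionOnto_apply_of_mem_right h.symm u.2] using this
    have hxq : q.linearProjOfIsCompl p h.symm x = 0 := by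
      apply Hq.2.1.1
      intro u
      have := hx (u : V)
      simpa [Submodule.linearProjOfIsCompl, Submodule.linearProjOfIsCompl_apply_left h.symm u,
        Submodule.projectionOnto_apply_of_mem_right h u.2] using this
    have hs : ((p.linearProjOfIsCompl q h x : V) + (q.linearProjOfIsCompl p h.symm x : V)) = x :=
      Submodule.projection_add_projection_eq_self h x
    rw [← hs, hxp, hxq]; simp
    have hxp : p.linearProjOfIsCompl q h x = 0 := by
      apply Hp.2.1.2
      intro u
      have := hx (u : V)
      simpa [Submodule.linearProjOfIsCompl, Submodule.linearProjOfIsCompl_apply_left h u,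
        Submodule.projectionOnto_apply_of_mem_right h.symm u.2] using this
    have hxq : q.linearProjOfIsCompl p h.symm x = 0 := by
      apply Hq.2.1.2
      intro u
      have := hx (u : V)
      simpa [Submodule.linearProjOfIsCompl, Submodule.linearProjOfIsCompl_apply_left h.symm u,
        Submodule.projectionOnto_apply_of_mem_right h u.2] using this
    have hs : ((p.linearProjOfIsCompl q h x : V) + (q.linearProjOfIsCompl p h.symm x : V)) = x :=
      Submodule.projection_add_projection_eq_self h x
    rw [← hs, hxp, hxq]; simp
  · intro x y
    simp only [LinearMap.add_apply, LinearMap.compl₁₂_apply]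
    rw [proj_comm_left h hp hq x, proj_comm_left h.symm hq hp x, proj_comm_left h hp hq y,
      proj_comm_left h.symm hq hp y, Hp.2.2, Hq.2.2]

end combine

/-- The "reversal" form on the span of a cyclic family `v, f v, ..., f^(d-1) v`. -/
lemma cyclic_good [FiniteDimensional k V] (f : Module.End k V) (d : ℕ) (hdpos : 0 < d)
    (hd : f ^ d = 0) (v : V)
    (indep : LinearIndependent k (fun i : Fin d => (f ^ (i : ℕ)) v))
    (hU : ∀ x ∈ Submodule.span k (Set.range fun i : Fin d => (f ^ (i : ℕ)) v), f x ∈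
      Submodule.span k (Set.range fun i : Fin d => (f ^ (i : ℕ)) v)) :
    ∃ B, Good (f.restrict hU) B := by
  set w : Fin d → V := fun i => (f ^ (i : ℕ)) v with hw
  set U := Submodule.span k (Set.range w) with hUdef
  set bU : Basis (Fin d) k U := Basis.span indep with hbU
  have bU_apply : ∀ i, (bU i : V) = w i := fun i => Module.Basis.coe_span_apply indep i
  set BU : LinearMap.BilinForm k U :=
    ∑ i : Fin d, (bU.coord i).smulRight (bU.coord i.rev) with hBU
  have BU_apply : ∀ x y : U, BU x y = ∑ i : Fin d, bU.repr x i * bU.repr y i.rev := by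
    intro x y
    rw [hBU]
    simp [LinearMap.sum_apply, Basis.coord_apply, smul_eq_mul]
  have BU_basis : ∀ a b : Fin d, BU (bU a) (bU b) =
      if (a : ℕ) + (b : ℕ) = d - 1 then 1 else 0 := by
    intro a b
    rw [BU_apply]
    rw [Finset.sum_eq_single a]
    · simp only [Basis.repr_self]
      rw [Finsupp.single_apply, Finsupp.single_apply]
      have : (b = a.rev) ↔ ((a : ℕ) + (b : ℕ) = d - 1) := by
        rw [Fin.ext_iff, Fin.val_rev]
        omega
      simp only [if_pos rfl, one_mul]
      by_cases hba : b = a.rev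
      · rw [if_pos hba, if_pos (this.mp hba)]; simp
      · rw [if_neg hba, if_neg (fun hc => hba (this.mpr hc))]; simp
    · intro i _ hne
      simp only [Basis.repr_self]
      rw [Finsupp.single_apply, if_neg (fun hc => hne hc.symm), zero_mul]
    · intro h; exact absurd (Finset.mem_univ a) h
  -- the restricted endomorphism on basis vectors
  have fU_apply : ∀ i : Fin d, ((f.restrict hU) (bU i) : V) = (f ^ ((i : ℕ) + 1)) v := by
    intro i
    rw [LinearMap.restrict_apply]
    show f (bU i : V) = _
    rw [bU_apply]
    simp only [hw]
    rw [pow_succ']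
    rfl
  have fU_bU : ∀ (i : Fin d) (h : (i : ℕ) + 1 < d),
      (f.restrict hU) (bU i) = bU ⟨(i : ℕ) + 1, h⟩ := by
    intro i h
    apply Subtype.ext
    rw [fU_apply, bU_apply]
  have fU_top : ∀ (i : Fin d), (i : ℕ) + 1 = d → (f.restrict hU) (bU i) = 0 := by
    intro i h
    apply Subtype.ext
    rw [fU_apply, h, hd]
    rfl
  have Bf_basis : ∀ a b : Fin d, BU ((f.restrict hU) (bU a)) (bU b) =
      if (a : ℕ) + (b : ℕ) + 1 = d - 1 then 1 else 0 := by
    intro a b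
    by_cases h : (a : ℕ) + 1 < d
    · rw [fU_bU a h, BU_basis]
      simp only [Fin.val_mk]
      exact if_congr (by omega) rfl rfl
    · have ha : (a : ℕ) + 1 = d := by have := a.2; omega
      rw [fU_top a ha]
      simp only [map_zero, LinearMap.zero_apply]
      rw [if_neg (by omega)]
  refine ⟨BU, ?_, ?_, ?_⟩
  · refine LinearMap.BilinForm.isSymm_iff.mpr (LinearMap.isSymm_iff_eq_flip.mpr ?_)
    apply bU.ext; intro a; apply bU.ext; intro b
    rw [LinearMap.flip_apply, BU_basis, BU_basis]
    rw [Nat.add_comm (a:ℕ) (b:ℕ)]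
  · refine nondeg_of_symm (LinearMap.BilinForm.isSymm_iff.mpr (LinearMap.isSymm_iff_eq_flip.mpr ?_)) ?_
    · apply bU.ext; intro a; apply bU.ext; intro b
      rw [LinearMap.flip_apply, BU_basis, BU_basis]
      rw [Nat.add_comm (a:ℕ) (b:ℕ)]
    intro x hx
    have hcoord : ∀ j : Fin d, bU.repr x j = 0 := by
      intro j
      have := hx (bU j.rev)
      rw [BU_apply] at this
      rw [Finset.sum_eq_single j] at this
      · simpa [Basis.repr_self, Finsupp.single_apply] using this
      · intro i _ hne
        simp only [Basis.repr_self]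
        rw [Finsupp.single_apply, if_neg (fun hc => hne (by
          have : i.rev.rev = j.rev.rev := by rw [← hc]
          simpa using this)), mul_zero]
      · intro h; exact absurd (Finset.mem_univ j) h
    have : bU.repr x = 0 := Finsupp.ext hcoord
    simpa using congrArg bU.repr.symm this
  · have : BU.compl₁₂ (f.restrict hU) LinearMap.id
        = BU.compl₁₂ LinearMap.id (f.restrict hU) := by
      apply bU.ext; intro a; apply bU.ext; intro b
      simp only [LinearMap.compl₁₂_apply, LinearMap.id_apply]
      rw [Bf_basis]
      -- RHS : BU (bU a) (fU (bU b))
      by_cases h : (b : ℕ) + 1 < d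
      · rw [fU_bU b h, BU_basis]
        simp only [Fin.val_mk]
        exact if_congr (by omega) rfl rfl
      · have hb : (b : ℕ) + 1 = d := by have := b.2; omega
        rw [fU_top b hb]
        simp only [map_zero]
        rw [if_neg (by have := a.2; omega)]
    intro x y
    have h2 := DFunLike.congr_fun (DFunLike.congr_fun this x) y
    simpa using h2



lemma nilp_good : ∀ (m : ℕ) {V : Type v} [AddCommGroup V] [Module k V]
    [FiniteDimensional k V] (f : Module.End k V), IsNilpotent f →
    Module.finrank k V ≤ m → ∃ B : LinearMap.BilinForm k V, Good f B := by
  intro m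
  induction m with
  | zero =>
    intro V _ _ _ f _ hr
    have hS : Subsingleton V := by
      have : Module.finrank k V = 0 := by omega
      exact Module.finrank_zero_iff.mp this
    exact ⟨0, good_zero f⟩
  | succ m IH =>
    intro V _ _ _ f hf hr
    classical
    rcases subsingleton_or_nontrivial V with hV | hV
    · exact ⟨0, good_zero f⟩
    have hex : ∃ e, f ^ e = 0 := hf
    have hexd : ∃ e, f ^ e = 0 := hex
    set d := Nat.find hexd with hd_def
    have hd : f ^ d = 0 := Nat.find_spec hexd
    have hdpos : 0 < d := by
      rcases Nat.eq_zero_or_pos d with h | h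
      · exfalso
        obtain ⟨x, hx⟩ := exists_ne (0 : V)
        have h0 : f ^ d = 0 := hd
        rw [h, pow_zero] at h0
        exact hx (by simpa using DFunLike.congr_fun h0 x)
      · exact h
    have hd1 : f ^ (d - 1) ≠ 0 := Nat.find_min hexd (by omega)
    obtain ⟨v, hv⟩ : ∃ v, (f ^ (d - 1)) v ≠ 0 := by
      by_contra h; push_neg at h
      exact hd1 (LinearMap.ext fun x => h x)
    obtain ⟨φ, hφ⟩ : ∃ φ : Module.Dual k V, φ ((f ^ (d - 1)) v) ≠ 0 := by
      by_contra h; push_neg at h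
      exact hv ((Module.forall_dual_apply_eq_zero_iff k _).mp h)
    set w : Fin d → V := fun i => (f ^ (i : ℕ)) v with hw
    have key : ∀ (c : Fin d → k) (i₀ : Fin d), (∀ j : Fin d, (j : ℕ) < (i₀ : ℕ) → c j = 0) →
        φ ((f ^ (d - 1 - (i₀ : ℕ))) (∑ i, c i • w i)) = c i₀ * φ ((f ^ (d - 1)) v) := by
      intro c i₀ hc
      rw [map_sum, map_sum, Finset.sum_eq_single i₀]
      · rw [map_smul, map_smul, smul_eq_mul]
        congr 2
        show (f ^ (d - 1 - (i₀ : ℕ))) ((f ^ (i₀ : ℕ)) v) = _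
        rw [← Module.End.mul_apply, ← pow_add]
        congr 2
        have := i₀.2
        omega
      · intro i _ hne
        rcases Nat.lt_or_ge (i : ℕ) (i₀ : ℕ) with hlt | hge
        · rw [hc i hlt]; simp
        · have hgt : (i₀ : ℕ) < (i : ℕ) := by
            rcases Nat.lt_or_ge (i₀ : ℕ) (i : ℕ) with h | h
            · exact h
            · exact absurd (Fin.ext (le_antisymm h hge)) hne
          have hz : (f ^ (d - 1 - (i₀ : ℕ))) (w i) = 0 := by
            show (f ^ (d - 1 - (i₀ : ℕ))) ((f ^ (i : ℕ)) v) = 0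
            rw [← Module.End.mul_apply, ← pow_add]
            have hpz : f ^ (d - 1 - (i₀ : ℕ) + (i : ℕ)) = 0 :=
              pow_eq_zero_of_le (by have := i₀.2; omega) hd
            rw [hpz]; rfl
          rw [map_smul, hz, smul_zero, map_zero]
      · intro h; exact absurd (Finset.mem_univ i₀) h
    have czero : ∀ (c : Fin d → k),
        (∀ mm : ℕ, mm < d → φ ((f ^ mm) (∑ i, c i • w i)) = 0) → ∀ i, c i = 0 := by
      intro c hc
      have H : ∀ (nn : ℕ) (hn : nn < d), c ⟨nn, hn⟩ = 0 := by
        intro nn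
        induction nn using Nat.strong_induction_on with
        | _ nn IH2 =>
          intro hn
          have hk := key c ⟨nn, hn⟩ (fun j hj => by
            have := IH2 (j : ℕ) hj j.2
            simpa using this)
          rw [hc _ (by omega : d - 1 - nn < d)] at hk
          rcases mul_eq_zero.mp hk.symm with h | h
          · exact h
          · exact absurd h hφ
      intro i
      have := H i.1 i.2
      simpa using this
    have indep : LinearIndependent k w := by
      rw [Fintype.linearIndependent_iff]
      intro g hg
      exact czero g (fun mm _ => by rw [hg]; simp)
    set U := Submodule.span k (Set.range w) with hUdef
    set Φ : V →ₗ[k] (Fin d → k) := LinearMap.pi (fun i : Fin d => φ ∘ₗ (f ^ (i : ℕ))) with hΦ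
    set W := LinearMap.ker Φ with hWdef
    have memW : ∀ x : V, x ∈ W ↔ ∀ i : Fin d, φ ((f ^ (i : ℕ)) x) = 0 := by
      intro x
      rw [hWdef, LinearMap.mem_ker, hΦ]
      constructor
      · intro h i
        have := congrFun h i
        simpa using this
      · intro h
        funext i
        simpa using h i
    have hdisj : Disjoint U W := by
      rw [Submodule.disjoint_def]
      intro x hxU hxW
      rw [hUdef, Submodule.mem_span_range_iff_exists_fun] at hxU
      obtain ⟨c, hc⟩ := hxU
      have hall : ∀ i, c i = 0 := by
        apply czero
        intro mm hmm
        rw [hc]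
        exact (memW x).mp hxW ⟨mm, hmm⟩
      rw [← hc]
      simp [hall]
    have hUinv : ∀ x ∈ U, f x ∈ U := by
      intro x hx
      have : Submodule.map f U ≤ U := by
        rw [hUdef, Submodule.map_span_le]
        rintro m ⟨i, rfl⟩
        by_cases h : (i : ℕ) + 1 < d
        · have : f (w i) = w ⟨(i : ℕ) + 1, h⟩ := by
            show f ((f ^ (i : ℕ)) v) = (f ^ ((i : ℕ) + 1)) v
            rw [pow_succ']; rfl
          rw [this]
          exact Submodule.subset_span ⟨_, rfl⟩
        · have hi : (i : ℕ) + 1 = d := by have := i.2; omega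
          have : f (w i) = 0 := by
            show f ((f ^ (i : ℕ)) v) = 0
            have : (f ^ ((i : ℕ) + 1)) v = 0 := by rw [hi, hd]; rfl
            rw [← this, pow_succ']; rfl
          rw [this]
          exact Submodule.zero_mem _
      exact this (Submodule.mem_map_of_mem hx)
    have hWinv : ∀ x ∈ W, f x ∈ W := by
      intro x hx
      rw [memW]
      intro i
      show φ ((f ^ (i : ℕ)) (f x)) = 0
      rw [← Module.End.mul_apply, ← pow_succ]
      by_cases h : (i : ℕ) + 1 < d
      · have := (memW x).mp hx ⟨(i : ℕ) + 1, h⟩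
        simpa using this
      · have hi : d ≤ (i : ℕ) + 1 := by omega
        have : f ^ ((i : ℕ) + 1) = 0 := pow_eq_zero_of_le hi hd
        rw [this]; simp
    have hrankU : Module.finrank k U = d := by
      rw [hUdef, finrank_span_eq_card indep, Fintype.card_fin]
    have hrankW : d + Module.finrank k W ≥ Module.finrank k V := by
      have h1 := LinearMap.finrank_range_add_finrank_ker Φ
      rw [← hWdef] at h1
      have h2 : Module.finrank k (LinearMap.range Φ) ≤ d := by
        have := Submodule.finrank_le (LinearMap.range Φ)
        rwa [Module.finrank_fin_fun] at this
      omega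
    have hcompl : IsCompl U W := by
      refine ⟨hdisj, codisjoint_iff.mpr ?_⟩
      apply Submodule.eq_top_of_finrank_eq
      have h1 := Submodule.finrank_sup_add_finrank_inf_eq U W
      rw [disjoint_iff.mp hdisj] at h1
      simp only [finrank_bot, add_zero] at h1
      have h2 := Submodule.finrank_le (U ⊔ W)
      omega
    have hWrank2 : Module.finrank k W ≤ m := by
      have h1 := Submodule.finrank_sup_add_finrank_inf_eq U W
      rw [disjoint_iff.mp hdisj] at h1
      simp only [finrank_bot, add_zero] at h1
      have h2 := Submodule.finrank_le (U ⊔ W)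
      omega
    have hWnilp : IsNilpotent (f.restrict hWinv) := by
      refine ⟨d, ?_⟩
      rw [Module.End.pow_restrict]
      apply LinearMap.ext
      intro x
      apply Subtype.ext
      rw [LinearMap.restrict_apply]
      simp [hd]
    obtain ⟨BW, hBW⟩ := IH (f.restrict hWinv) hWnilp hWrank2
    obtain ⟨BU, hBU⟩ := cyclic_good f d hdpos hd v indep hUinv
    exact combine hcompl hUinv hWinv hBU hBW


lemma good_exists [IsAlgClosed k] : ∀ (m : ℕ) {V : Type v} [AddCommGroup V] [Module k V]
    [FiniteDimensional k V] (f : Module.End k V),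
    Module.finrank k V ≤ m → ∃ B : LinearMap.BilinForm k V, Good f B := by
  intro m
  induction m with
  | zero =>
    intro V _ _ _ f hr
    have h0 : Module.finrank k V = 0 := by omega
    have hS : Subsingleton V := Module.finrank_zero_iff.mp h0
    exact ⟨0, good_zero f⟩
  | succ m IH =>
    intro V _ _ _ f hr
    rcases subsingleton_or_nontrivial V with hV | hV
    · exact ⟨0, good_zero f⟩
    obtain ⟨μ, hμ⟩ := Module.End.exists_eigenvalue f
    set g := f - μ • (1 : Module.End k V) with hg
    have hfg : ∀ x : V, f x = g x + μ • x := by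
      intro x; rw [hg]; simp
    by_cases hnil : IsNilpotent g
    · obtain ⟨B, hB⟩ := nilp_good (m + 1) g hnil hr
      refine ⟨B, hB.1, hB.2.1, ?_⟩
      intro x y
      rw [hfg x, hfg y]
      simp only [map_add, map_smul, LinearMap.add_apply, LinearMap.smul_apply]
      rw [hB.2.2 x y]
    · obtain ⟨N₀, hN₀⟩ := Filter.eventually_atTop.mp g.eventually_isCompl_ker_pow_range_pow
      set N := max N₀ 1 with hNdef
      have hNcompl : IsCompl (LinearMap.ker (g ^ N)) (LinearMap.range (g ^ N)) :=
        hN₀ N (le_max_left _ _)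
      have hcommfg : Commute f g := by
        rw [hg]
        exact (Commute.refl f).sub_right ((Commute.one_right f).smul_right μ)
      have hcomm : Commute f (g ^ N) := hcommfg.pow_right N
      have hK : ∀ x ∈ LinearMap.ker (g ^ N), f x ∈ LinearMap.ker (g ^ N) := by
        intro x hx
        rw [LinearMap.mem_ker] at hx ⊢
        rw [← Module.End.mul_apply, ← hcomm.eq, Module.End.mul_apply, hx, map_zero]
      have hR : ∀ x ∈ LinearMap.range (g ^ N), f x ∈ LinearMap.range (g ^ N) := by
        rintro x ⟨y, rfl⟩
        exact ⟨f y, by rw [← Module.End.mul_apply, ← hcomm.eq, Module.End.mul_apply]⟩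
      have hKne : LinearMap.ker (g ^ N) ≠ ⊥ := by
        obtain ⟨v, hv⟩ := hμ.exists_hasEigenvector
        have hgv : g v = 0 := by
          rw [hg]
          simp only [LinearMap.sub_apply, LinearMap.smul_apply, Module.End.one_apply]
          rw [hv.apply_eq_smul]
          simp
        intro hbot
        have hvK : v ∈ LinearMap.ker (g ^ N) := by
          rw [LinearMap.mem_ker]
          have h1 : v ∈ LinearMap.ker g := LinearMap.mem_ker.mpr hgv
          have hle : LinearMap.ker (g ^ 1) ≤ LinearMap.ker (g ^ N) :=
            g.iterateKer.monotone (le_max_right _ _)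
          rw [pow_one] at hle
          exact LinearMap.mem_ker.mp (hle h1)
        rw [hbot] at hvK
        exact hv.2 (by simpa using hvK)
      have hRne : LinearMap.range (g ^ N) ≠ ⊥ := by
        intro hbot
        rw [LinearMap.range_eq_bot] at hbot
        exact hnil ⟨N, hbot⟩
      have hsum : Module.finrank k (LinearMap.ker (g ^ N))
          + Module.finrank k (LinearMap.range (g ^ N)) = Module.finrank k V := by
        have h1 := Submodule.finrank_sup_add_finrank_inf_eq
          (LinearMap.ker (g ^ N)) (LinearMap.range (g ^ N))
        rw [disjoint_iff.mp hNcompl.disjoint, codisjoint_iff.mp hNcompl.codisjoint] at h1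
        simpa [finrank_top] using h1.symm
      have hKpos : 0 < Module.finrank k (LinearMap.ker (g ^ N)) := by
        rcases Nat.eq_zero_or_pos (Module.finrank k (LinearMap.ker (g ^ N))) with h | h
        · exact absurd (Submodule.finrank_eq_zero.mp h) hKne
        · exact h
      have hRpos : 0 < Module.finrank k (LinearMap.range (g ^ N)) := by
        rcases Nat.eq_zero_or_pos (Module.finrank k (LinearMap.range (g ^ N))) with h | h
        · exact absurd (Submodule.finrank_eq_zero.mp h) hRne
        · exact h
      obtain ⟨BK, hBK⟩ := IH (f.restrict hK) (by omega)
      obtain ⟨BR, hBR⟩ := IH (f.restrict hR) (by omega)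
      exact combine hNcompl hK hR hBK hBR


lemma exists_orthonormal [IsAlgClosed k] [CharZero k] {V : Type v} [AddCommGroup V] [Module k V]
    [FiniteDimensional k V] {B : LinearMap.BilinForm k V} (hsymm : B.IsSymm)
    (hnd : B.Nondegenerate) :
    ∃ b : Basis (Fin (Module.finrank k V)) k V,
      ∀ i j, B (b i) (b j) = if i = j then 1 else 0 := by
  have h2 : Invertible (2 : k) := invertibleOfNonzero two_ne_zero
  obtain ⟨b, hb⟩ := LinearMap.BilinForm.exists_orthogonal_basis (LinearMap.BilinForm.isSymm_iff.mp hsymm)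
  have hdiag : ∀ i, B (b i) (b i) ≠ 0 := by
    intro i hzero
    have hall : ∀ y, B (b i) y = 0 := by
      intro y
      have hy := b.sum_repr y
      rw [← hy, map_sum]
      refine Finset.sum_eq_zero fun j _ => ?_
      rw [map_smul, smul_eq_mul]
      by_cases hij : j = i
      · rw [hij, hzero, mul_zero]
      · rw [hb (fun h => hij h.symm), mul_zero]
    have : b i = 0 := by
      apply hnd.1
      exact hall
    exact b.ne_zero i this
  have hsq : ∀ i, ∃ c : k, c ^ 2 = B (b i) (b i) := fun i =>
    IsAlgClosed.exists_pow_nat_eq (B (b i) (b i)) (n := 2) (by norm_num)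
  choose c hc using hsq
  have hcne : ∀ i, c i ≠ 0 := by
    intro i h
    apply hdiag i
    rw [← hc i, h]
    ring
  set u : Fin (Module.finrank k V) → kˣ :=
    fun i => Units.mk0 (c i)⁻¹ (inv_ne_zero (hcne i)) with hu
  refine ⟨b.unitsSMul u, fun i j => ?_⟩
  rw [Basis.unitsSMul_apply, Basis.unitsSMul_apply, Units.smul_def, Units.smul_def]
  simp only [map_smul, LinearMap.smul_apply, smul_eq_mul, hu, Units.val_mk0]
  by_cases hij : i = j
  · subst hij
    rw [if_pos rfl, ← hc i]
    rw [sq]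
    field_simp
    exact div_self (hcne i)
  · rw [hb hij, if_neg hij]
    ring

end SymmConjAux

/-- Every square matrix over an algebraically closed field of characteristic 0 is conjugate
(similar) to a symmetric matrix. -/
theorem isConj_symmetric_matrix
    {k : Type*} [Field k] [IsAlgClosed k] [CharZero k] (n : ℕ)
    (s : Matrix (Fin n) (Fin n) k) :
    ∃ g : (Matrix (Fin n) (Fin n) k)ˣ,
      ((g : Matrix (Fin n) (Fin n) k) * s * (↑g⁻¹ : Matrix (Fin n) (Fin n) k)).IsSymm := by
  classical
  set f : Module.End k (Fin n → k) := s.mulVecLin with hf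
  obtain ⟨B, hB⟩ := SymmConjAux.good_exists (Module.finrank k (Fin n → k)) f le_rfl
  obtain ⟨b₀, hb₀⟩ := SymmConjAux.exists_orthonormal hB.1 hB.2.1
  have hrank : Module.finrank k (Fin n → k) = n := Module.finrank_fin_fun k
  set b : Basis (Fin n) k (Fin n → k) := b₀.reindex (finCongr hrank) with hbdef
  have hbo : ∀ i j, B (b i) (b j) = if i = j then 1 else 0 := by
    intro i j
    rw [hbdef]
    simp only [Basis.reindex_apply]
    rw [hb₀]
    exact if_congr ((finCongr hrank).symm.apply_eq_iff_eq) rfl rfl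
  set A : Matrix (Fin n) (Fin n) k := Matrix.of (fun i j => b.repr (f (b j)) i) with hA
  have hBA : ∀ i j, B (f (b j)) (b i) = A i j := by
    intro i j
    conv_lhs => rw [← b.sum_repr (f (b j))]
    rw [map_sum, LinearMap.sum_apply]
    rw [Finset.sum_eq_single i]
    · rw [map_smul, LinearMap.smul_apply, hbo, if_pos rfl, smul_eq_mul, mul_one]
      rfl
    · intro m _ hne
      rw [map_smul, LinearMap.smul_apply, hbo, if_neg hne, smul_eq_mul, mul_zero]
    · intro h
      exact absurd (Finset.mem_univ i) h
  have hAsymm : A.IsSymm := by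
    rw [Matrix.IsSymm]
    ext i j
    rw [Matrix.transpose_apply]
    have h1 : A j i = B (f (b i)) (b j) := (hBA j i).symm
    have h2 : B (f (b i)) (b j) = B (b i) (f (b j)) := hB.2.2 (b i) (b j)
    have h3 : B (f (b j)) (b i) = B (b i) (f (b j)) := by
      have := hB.1.eq (f (b j)) (b i)
      simpa using this
    rw [h1, h2, ← h3, hBA]
  set e : Basis (Fin n) k (Fin n → k) := Pi.basisFun k (Fin n) with he
  set P : Matrix (Fin n) (Fin n) k := e.toMatrix b with hP
  set Q : Matrix (Fin n) (Fin n) k := b.toMatrix e with hQ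
  have hPQ : P * Q = 1 := e.toMatrix_mul_toMatrix_flip b
  have hQP : Q * P = 1 := b.toMatrix_mul_toMatrix_flip e
  have hPentry : ∀ i j, P i j = b j i := by
    intro i j
    rw [hP, Basis.toMatrix_apply, he]
    simp
  have hsP : s * P = P * A := by
    ext i j
    rw [Matrix.mul_apply, Matrix.mul_apply]
    have hL : ∑ l, s i l * P l j = f (b j) i := by
      rw [hf]
      simp only [Matrix.mulVecLin_apply, Matrix.mulVec, dotProduct, hPentry]
    have hR : ∑ l, P i l * A l j = f (b j) i := by
      have hsr := b.sum_repr (f (b j))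
      calc ∑ l, P i l * A l j = ∑ l, b.repr (f (b j)) l * (b l) i := by
            refine Finset.sum_congr rfl fun l _ => ?_
            rw [hPentry]
            rw [hA]
            simp only [Matrix.of_apply]
            ring
        _ = (∑ l, b.repr (f (b j)) l • b l) i := by
            rw [Finset.sum_apply]
            refine Finset.sum_congr rfl fun l _ => ?_
            simp [smul_eq_mul]
        _ = f (b j) i := by rw [hsr]
    rw [hL, hR]
  refine ⟨⟨Q, P, hQP, hPQ⟩, ?_⟩
  have hg1 : ((⟨Q, P, hQP, hPQ⟩ : (Matrix (Fin n) (Fin n) k)ˣ) : Matrix (Fin n) (Fin n) k) = Q := rfl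
  have hg2 : ((((⟨Q, P, hQP, hPQ⟩ : (Matrix (Fin n) (Fin n) k)ˣ))⁻¹ :
      (Matrix (Fin n) (Fin n) k)ˣ) : Matrix (Fin n) (Fin n) k) = P := rfl
  rw [hg1, hg2]
  have hconj : Q * s * P = A := by
    rw [Matrix.mul_assoc, hsP, ← Matrix.mul_assoc, hQP, Matrix.one_mul]
  rw [hconj]
  exact hAsymm
end

section
/- Let s be an n×n matrix over an algebraically closed field of characteristic 0 with n distinct eigenvalues. Define K(s) = {g ∈ GL_n : there exists an invertible 2×2 matrix (a b; c d) such that c·s + d·I is invertible and g s g⁻¹ = (a·s + b·I)(c·s + d·I)⁻¹}. Then K(s) is contained in the normalizer of the centralizer Z(s) of s. -/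
/-- The centralizer `Z(s) = {g ∈ GL_n : g s = s g}` of a matrix `s`, as a subgroup of `GL_n`. -/
def matrixCentralizer {K : Type*} [Field K] {n : ℕ}
    (s : Matrix (Fin n) (Fin n) K) : Subgroup (Matrix (Fin n) (Fin n) K)ˣ where
  carrier := {g | (g : Matrix (Fin n) (Fin n) K) * s = s * (g : Matrix (Fin n) (Fin n) K)}
  one_mem' := by simp
  mul_mem' := by
    intro a b ha hb
    simp only [Set.mem_setOf_eq, Units.val_mul] at *
    rw [mul_assoc, hb, ← mul_assoc, ha, mul_assoc]
  inv_mem' := by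
    intro a ha
    simp only [Set.mem_setOf_eq] at *
    calc (↑a⁻¹ : Matrix (Fin n) (Fin n) K) * s
        = ↑a⁻¹ * s * (↑a * ↑a⁻¹) := by rw [Units.mul_inv, mul_one]
      _ = ↑a⁻¹ * (s * ↑a) * ↑a⁻¹ := by simp only [mul_assoc]
      _ = ↑a⁻¹ * (↑a * s) * ↑a⁻¹ := by rw [ha]
      _ = s * ↑a⁻¹ := by rw [← mul_assoc, Units.inv_mul, one_mul]

section Aux

/-- Conjugation by an invertible element preserves products. -/
lemma conj_mul_conj' {R : Type*} [Ring R] {q q' : R} (h1 : q * q' = 1)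
    (m x : R) : (q' * m * q) * (q' * x * q) = q' * (m * x) * q := by
  have h : m * (q * q') * x = m * x := by rw [h1, mul_one]
  calc (q' * m * q) * (q' * x * q) = q' * (m * (q * q') * x) * q := by
        simp only [mul_assoc]
    _ = q' * (m * x) * q := by rw [h]

lemma conj_inj' {R : Type*} [Ring R] {q q' : R} (h1 : q * q' = 1)
    {A B : R} (h : q' * A * q = q' * B * q) : A = B := by
  have h' := congrArg (fun X => q * X * q') h
  simpa only [mul_assoc, ← mul_assoc q q', h1, one_mul, mul_one,
    show ∀ y : R, q * (q' * y) = y from fun y => by rw [← mul_assoc, h1, one_mul],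
    show ∀ y : R, y * (q * q') = y from fun y => by rw [h1, mul_one]] using h'

/-- Commuting is preserved by conjugation. -/
lemma conj_comm_iff' {R : Type*} [Ring R] {q q' : R} (h1 : q * q' = 1)
    (m x : R) : m * x = x * m ↔ (q' * m * q) * (q' * x * q) = (q' * x * q) * (q' * m * q) := by
  rw [conj_mul_conj' h1, conj_mul_conj' h1]
  constructor
  · intro h; rw [h]
  · intro h; exact conj_inj' h1 h

/-- Conjugation fixes scalar matrices. -/
lemma conj_smul_one' {R : Type*} [Ring R] {K : Type*} [CommSemiring K] [Algebra K R]
    {q q' : R} (h : q * q' = 1) (x : K) : q * (x • (1 : R)) * q' = x • 1 := by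
  calc q * (x • (1 : R)) * q' = x • (q * 1 * q') := by rw [mul_smul_comm, smul_mul_assoc]
    _ = x • 1 := by rw [mul_one, h]

/-- A matrix commuting with a diagonal matrix with distinct entries is diagonal. -/
lemma comm_diagonal_iff {K : Type*} [Field K] {n : ℕ} {d : Fin n → K} (hd : Function.Injective d)
    (M : Matrix (Fin n) (Fin n) K) :
    M * Matrix.diagonal d = Matrix.diagonal d * M ↔ M = Matrix.diagonal (fun i => M i i) := by
  constructor
  · intro h
    ext i j
    by_cases hij : i = j
    · subst hij; simp [Matrix.diagonal]
    · have h1 := congrFun (congrFun h i) j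
      rw [Matrix.mul_diagonal, Matrix.diagonal_mul] at h1
      have hdd : d j - d i ≠ 0 := sub_ne_zero.mpr (fun hdd => hij (hd (hdd.symm)))
      have hz : M i j * (d j - d i) = 0 := by linear_combination h1
      have hM : M i j = 0 := by
        rcases mul_eq_zero.mp hz with h' | h'
        · exact h'
        · exact absurd h' hdd
      simp [Matrix.diagonal, hij, hM]
  · intro h
    rw [h, Matrix.diagonal_mul_diagonal, Matrix.diagonal_mul_diagonal]
    exact congrArg Matrix.diagonal (funext fun i => mul_comm (M i i) (d i))

end Aux

/-- Let `s` be an `n × n` matrix over an algebraically closed field of characteristic 0 with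
`n` distinct eigenvalues.  If `g ∈ GL_n` satisfies `g s g⁻¹ = (a•s + b•1)(c•s + d•1)⁻¹` for some
invertible 2×2 matrix `(a b; c d)` with `c•s + d•1` invertible, then `g` lies in the normalizer
of the centralizer `Z(s)` of `s`. -/
theorem Ks_subset_normalizer_centralizer
    {K : Type*} [Field K] [IsAlgClosed K] [CharZero K] {n : ℕ}
    (s : Matrix (Fin n) (Fin n) K)
    (hreg : ∃ (P : (Matrix (Fin n) (Fin n) K)ˣ) (d : Fin n → K),
      Function.Injective d ∧
      (↑P⁻¹ : Matrix (Fin n) (Fin n) K) * s * (P : Matrix (Fin n) (Fin n) K)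
        = Matrix.diagonal d)
    (g : (Matrix (Fin n) (Fin n) K)ˣ)
    (hg : ∃ a b c d : K, a * d - b * c ≠ 0 ∧
      IsUnit (c • s + d • (1 : Matrix (Fin n) (Fin n) K)) ∧
      (↑g : Matrix (Fin n) (Fin n) K) * s * (↑g⁻¹ : Matrix (Fin n) (Fin n) K)
          * (c • s + d • 1)
        = a • s + b • 1) :
    g ∈ Subgroup.normalizer (matrixCentralizer s : Set (Matrix (Fin n) (Fin n) K)ˣ) := by
  classical
  obtain ⟨P, dfun, hdinj, hPs⟩ := hreg
  obtain ⟨a, b, c, d, _hdet, hu, heq⟩ := hg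
  set Q : Matrix (Fin n) (Fin n) K := (P : Matrix (Fin n) (Fin n) K) with hQ
  set Qi : Matrix (Fin n) (Fin n) K :=
    ((P⁻¹ : (Matrix (Fin n) (Fin n) K)ˣ) : Matrix (Fin n) (Fin n) K) with hQi
  set G : Matrix (Fin n) (Fin n) K := (g : Matrix (Fin n) (Fin n) K) with hG
  set Gi : Matrix (Fin n) (Fin n) K :=
    ((g⁻¹ : (Matrix (Fin n) (Fin n) K)ˣ) : Matrix (Fin n) (Fin n) K) with hGi
  have hQQi : Q * Qi = 1 := P.mul_inv
  have hQiQ : Qi * Q = 1 := P.inv_mul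
  have hGGi : G * Gi = 1 := g.mul_inv
  have hGiG : Gi * G = 1 := g.inv_mul
  set t : Matrix (Fin n) (Fin n) K := G * s * Gi with ht
  -- Step A : t commutes with s
  obtain ⟨U, hU⟩ := hu
  set u : Matrix (Fin n) (Fin n) K := (U : Matrix (Fin n) (Fin n) K) with hu'
  set ui : Matrix (Fin n) (Fin n) K :=
    ((U⁻¹ : (Matrix (Fin n) (Fin n) K)ˣ) : Matrix (Fin n) (Fin n) K) with hui
  have hUUi : u * ui = 1 := U.mul_inv
  have hUiU : ui * u = 1 := U.inv_mul
  have hsu : s * u = u * s := by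
    rw [hU]
    simp [mul_add, add_mul, mul_smul_comm, smul_mul_assoc, mul_one, one_mul]
  have hsUinv : s * ui = ui * s := by
    calc s * ui = 1 * (s * ui) := (one_mul _).symm
      _ = (ui * u) * (s * ui) := by rw [hUiU]
      _ = ui * ((u * s) * ui) := by simp only [mul_assoc]
      _ = ui * ((s * u) * ui) := by rw [hsu]
      _ = (ui * s) * (u * ui) := by simp only [mul_assoc]
      _ = ui * s := by rw [hUUi, mul_one]
  have h1' : t * u = a • s + b • 1 := by rw [hU]; exact heq
  have ht_eq : t = (a • s + b • 1) * ui := by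
    rw [← h1', mul_assoc, hUUi, mul_one]
  have hsr : s * (a • s + b • 1) = (a • s + b • 1) * s := by
    simp [mul_add, add_mul, mul_smul_comm, smul_mul_assoc, mul_one, one_mul]
  have hts : t * s = s * t := by
    rw [ht_eq, mul_assoc, ← hsUinv, ← mul_assoc, ← hsr, mul_assoc]
  -- Step B : conjugate by P
  have hMD : (Qi * t * Q) * Matrix.diagonal dfun = Matrix.diagonal dfun * (Qi * t * Q) := by
    have h := (conj_comm_iff' hQQi t s).mp hts
    rwa [hPs] at h
  have hMdiag : Qi * t * Q = Matrix.diagonal (fun i => (Qi * t * Q) i i) :=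
    (comm_diagonal_iff hdinj _).mp hMD
  set e : Fin n → K := fun i => (Qi * t * Q) i i with he
  -- Step C : e is injective
  have hdet_eq : ∀ x : K, ∏ i, (e i - x) = ∏ i, (dfun i - x) := by
    intro x
    have h1 : Matrix.diagonal e - x • (1 : Matrix (Fin n) (Fin n) K) = Qi * (t - x • 1) * Q := by
      rw [mul_sub, sub_mul, conj_smul_one' hQiQ, hMdiag]
    have h2 : t - x • (1 : Matrix (Fin n) (Fin n) K) = G * (s - x • 1) * Gi := by
      rw [mul_sub, sub_mul, conj_smul_one' hGGi, ht]
    have h3 : Matrix.diagonal dfun - x • (1 : Matrix (Fin n) (Fin n) K)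
        = Qi * (s - x • 1) * Q := by
      rw [mul_sub, sub_mul, conj_smul_one' hQiQ, hPs]
    have detconj : ∀ (q q' A : Matrix (Fin n) (Fin n) K), q' * q = 1 →
        (q' * A * q).det = A.det := by
      intro q q' A hqq
      have h4 : q'.det * q.det = 1 := by
        rw [← Matrix.det_mul, hqq, Matrix.det_one]
      rw [Matrix.det_mul, Matrix.det_mul]
      calc q'.det * A.det * q.det = (q'.det * q.det) * A.det := by ring
        _ = A.det := by rw [h4, one_mul]
    have hde : (Matrix.diagonal e - x • (1 : Matrix (Fin n) (Fin n) K)).det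
        = (Matrix.diagonal dfun - x • (1 : Matrix (Fin n) (Fin n) K)).det := by
      rw [h1, h3, detconj _ _ _ hQiQ, h2]
      have h5 : (G * (s - x • 1) * Gi : Matrix (Fin n) (Fin n) K).det = (s - x • 1).det :=
        detconj Gi G (s - x • 1) hGGi
      rw [h5, detconj _ _ _ hQiQ]
    have hdiag : ∀ f : Fin n → K,
        Matrix.diagonal f - x • (1 : Matrix (Fin n) (Fin n) K)
          = Matrix.diagonal (fun i => f i - x) := by
      intro f
      ext i j
      by_cases hij : i = j
      · subst hij
        simp [Matrix.sub_apply, Matrix.smul_apply, Matrix.diagonal_apply_eq, Matrix.one_apply_eq]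
      · simp [Matrix.sub_apply, Matrix.smul_apply, Matrix.diagonal_apply_ne _ hij,
          Matrix.one_apply_ne hij]
    rw [hdiag, hdiag, Matrix.det_diagonal, Matrix.det_diagonal] at hde
    exact hde
  have heinj : Function.Injective e := by
    by_contra hne
    have hcard : (Finset.image e Finset.univ).card < n := by
      rcases Function.not_injective_iff.mp hne with ⟨i, j, hij, hne'⟩
      have hsub : Finset.image e Finset.univ ⊆ Finset.image e (Finset.univ.erase j) := by
        intro x hx
        rcases Finset.mem_image.mp hx with ⟨k, _, hk⟩
        by_cases hkj : k = j
        · exact Finset.mem_image.mpr ⟨i, Finset.mem_erase.mpr ⟨hne', Finset.mem_univ i⟩,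
            by rw [← hk, hkj, hij]⟩
        · exact Finset.mem_image.mpr ⟨k, Finset.mem_erase.mpr ⟨hkj, Finset.mem_univ k⟩, hk⟩
      calc (Finset.image e Finset.univ).card
          ≤ (Finset.image e (Finset.univ.erase j)).card := Finset.card_le_card hsub
        _ ≤ (Finset.univ.erase j).card := Finset.card_image_le
        _ = n - 1 := by
            rw [Finset.card_erase_of_mem (Finset.mem_univ j), Finset.card_univ, Fintype.card_fin]
        _ < n := by have hn : 0 < n := Fin.pos i; omega
    have hdcard : (Finset.image dfun Finset.univ).card = n := by
      rw [Finset.card_image_of_injective _ hdinj, Finset.card_univ, Fintype.card_fin]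
    have hnsub : ¬ (Finset.image dfun Finset.univ ⊆ Finset.image e Finset.univ) := by
      intro hsub
      have := Finset.card_le_card hsub
      omega
    rcases Finset.not_subset.mp hnsub with ⟨x, hx, hxe⟩
    rcases Finset.mem_image.mp hx with ⟨k, _, hk⟩
    have hL : ∏ i, (e i - x) ≠ 0 := by
      apply Finset.prod_ne_zero_iff.mpr
      intro i _
      apply sub_ne_zero.mpr
      intro hcontra
      exact hxe (Finset.mem_image.mpr ⟨i, Finset.mem_univ i, hcontra⟩)
    have hR : ∏ i, (dfun i - x) = 0 :=
      Finset.prod_eq_zero (Finset.mem_univ k) (by rw [hk, sub_self])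
    rw [hdet_eq x, hR] at hL
    exact hL rfl
  -- Step D : conclude, via g⁻¹ ∈ normalizer
  have hginv : g⁻¹ ∈ Subgroup.normalizer (matrixCentralizer s : Set (Matrix (Fin n) (Fin n) K)ˣ) := by
    simp only [Subgroup.mem_normalizer_iff, SetLike.mem_coe]
    intro h
    set H : Matrix (Fin n) (Fin n) K := (h : Matrix (Fin n) (Fin n) K) with hH
    have hmem1 : h ∈ matrixCentralizer s ↔ H * s = s * H := Iff.rfl
    have hcoe : ((g⁻¹ * h * (g⁻¹)⁻¹ : (Matrix (Fin n) (Fin n) K)ˣ) : Matrix (Fin n) (Fin n) K)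
        = Gi * H * G := by
      rw [inv_inv, Units.val_mul, Units.val_mul]
    have hmem2 : g⁻¹ * h * (g⁻¹)⁻¹ ∈ matrixCentralizer s ↔
        ((g⁻¹ * h * (g⁻¹)⁻¹ : (Matrix (Fin n) (Fin n) K)ˣ) : Matrix (Fin n) (Fin n) K) * s
          = s * ((g⁻¹ * h * (g⁻¹)⁻¹ : (Matrix (Fin n) (Fin n) K)ˣ) : Matrix (Fin n) (Fin n) K) :=
      Iff.rfl
    rw [hcoe] at hmem2
    have hgit : Gi * t * G = s := by
      rw [ht]
      calc Gi * (G * s * Gi) * G = (Gi * G) * s * (Gi * G) := by simp only [mul_assoc]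
        _ = s := by rw [hGiG, one_mul, mul_one]
    have step1 : H * s = s * H ↔
        Qi * H * Q = Matrix.diagonal (fun i => (Qi * H * Q) i i) := by
      rw [conj_comm_iff' hQQi H s, hPs, comm_diagonal_iff hdinj]
    have step2 : H * t = t * H ↔
        Qi * H * Q = Matrix.diagonal (fun i => (Qi * H * Q) i i) := by
      rw [conj_comm_iff' hQQi H t, hMdiag, comm_diagonal_iff heinj]
    have step3 : H * t = t * H ↔ (Gi * H * G) * s = s * (Gi * H * G) := by
      rw [conj_comm_iff' hGGi H t, hgit]
    rw [hmem1, hmem2, step1, ← step2, step3]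
  have hmem := (Subgroup.normalizer (matrixCentralizer s : Set (Matrix (Fin n) (Fin n) K)ˣ)).inv_mem hginv
  rwa [inv_inv] at hmem
end

section
/- Let Φ be an irreducible root system with set of simple roots Δ, highest root θ, and ρ the half-sum of positive roots. If α is a root such that α + ρ is regular (i.e., ⟨α+ρ, β^∨⟩ ≠ 0 for all roots β), then α is one of: the highest root θ, the highest short root θ⁺, the root θ^{++} = s_k(θ⁺ + α_k) (when there are two root lengths), or the negative −α_i of a simple root. -/
open RealInnerProductSpace

/-- The reflection `s_α` in the hyperplane orthogonal to `α`. -/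
noncomputable def sref {V : Type*} [NormedAddCommGroup V] [InnerProductSpace ℝ V]
    [FiniteDimensional ℝ V] (α : V) : V ≃ₗᵢ[ℝ] V :=
  Submodule.reflection ((ℝ ∙ α)ᗮ)

/-- The pairing `⟨lam, α^∨⟩ = 2⟪lam, α⟫/⟪α, α⟫` of a weight `lam` with the coroot of `α`. -/
noncomputable def cpair {V : Type*} [NormedAddCommGroup V] [InnerProductSpace ℝ V]
    (α lam : V) : ℝ := 2 * ⟪lam, α⟫ / ⟪α, α⟫

section Helpers

variable {V : Type*} [NormedAddCommGroup V] [InnerProductSpace ℝ V] [FiniteDimensional ℝ V]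

private theorem rsp {x : V} (h : x ≠ 0) : (0:ℝ) < ⟪x,x⟫ := by
  rw [real_inner_self_eq_norm_sq]; exact pow_pos (norm_pos_iff.mpr h) 2

private theorem sref_apply' (α x : V) : sref α x = x - cpair α x • α := by
  rcases eq_or_ne α 0 with h | h
  · simp [sref, h, cpair, Submodule.reflection_apply,
      Submodule.starProjection_eq_self_iff.2 (Submodule.mem_top (R := ℝ) (x := x)), two_smul]
  have h2 : (‖α‖:ℝ)^2 ≠ 0 := pow_ne_zero 2 (norm_ne_zero_iff.mpr h)
  rw [sref, cpair, Submodule.reflection_apply, Submodule.starProjection_orthogonal_val,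
    Submodule.starProjection_singleton, real_inner_self_eq_norm_sq, real_inner_comm]
  push_cast
  simp only [RCLike.ofReal_real_eq_id, id]
  match_scalars
  all_goals (field_simp; try ring)

private theorem sref_sref' (α x : V) : sref α (sref α x) = x := by simp [sref]

private theorem sref_inner' (α x y : V) : ⟪sref α x, y⟫ = ⟪x, sref α y⟫ := by
  conv_lhs => rw [← sref_sref' α y]
  exact (sref α).inner_map_map x (sref α y)

private theorem sref_inner_self' (α x : V) : ⟪sref α x, sref α x⟫ = ⟪x, x⟫ :=
  (sref α).inner_map_map x x

private theorem sref_eq (β τ : V) (c : ℝ) (hβ : β ≠ 0) (h : 2*⟪τ,β⟫ = c*⟪β,β⟫) :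
    sref β τ = τ - c • β := by
  have h3 : (0:ℝ) < ⟪β,β⟫ := rsp hβ
  rw [sref_apply']
  have : cpair β τ = c := by rw [cpair]; field_simp; linarith
  rw [this]

end Helpers

set_option maxHeartbeats 2000000 in
/-- Let `Φ` be an irreducible root system with simple roots `Δ`, highest root `θ` and `ρ` the
half-sum of positive roots (characterized by `⟨ρ, α^∨⟩ = 1` for all simple `α`).  If `α ∈ Φ`
is such that `α + ρ` is regular, then `α` is the highest root `θ`, the negative of a simple
root, the highest short root `θ⁺`, or the root `θ^{++} = s_k(θ⁺ + α_k)` where `α_k` is the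
unique simple root such that `θ⁺ + α_k` is a root. -/
theorem regular_weight_root_plus_rho
    {V : Type*} [NormedAddCommGroup V] [InnerProductSpace ℝ V] [FiniteDimensional ℝ V]
    (Φ Δ : Finset V)
    -- root system axioms
    (h0 : (0 : V) ∉ Φ)
    (hspan : Submodule.span ℝ (Φ : Set V) = ⊤)
    (hrefl : ∀ α ∈ Φ, ∀ β ∈ Φ, sref α β ∈ Φ)
    (hint : ∀ α ∈ Φ, ∀ β ∈ Φ, ∃ z : ℤ, cpair α β = z)
    (hred : ∀ α ∈ Φ, ∀ t : ℝ, t • α ∈ Φ → t = 1 ∨ t = -1)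
    -- Δ is a system of simple roots: every root is a nonnegative integral combination of
    -- simple roots, or the negative of one
    (hΔΦ : (Δ : Set V) ⊆ Φ)
    (hΔind : LinearIndependent ℝ (Subtype.val : {x : V // x ∈ Δ} → V))
    (hΔgen : ∀ β ∈ Φ, β ∈ AddSubmonoid.closure (Δ : Set V)
      ∨ -β ∈ AddSubmonoid.closure (Δ : Set V))
    -- ρ, the half-sum of the positive roots
    (ρ : V) (hρ : ∀ α ∈ Δ, cpair α ρ = 1)
    -- θ, the highest root (its existence forces Φ to be irreducible)
    (θ : V) (hθΦ : θ ∈ Φ)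
    (hθmax : ∀ β ∈ Φ, θ - β ∈ AddSubmonoid.closure (Δ : Set V))
    -- α is a root such that α + ρ is regular
    (α : V) (hα : α ∈ Φ)
    (hreg : ∀ β ∈ Φ, cpair β (α + ρ) ≠ 0) :
    α = θ ∨ (∃ γ ∈ Δ, α = -γ) ∨
    (∃ θp ∈ Φ, (∀ β ∈ Φ, ‖θp‖ ≤ ‖β‖) ∧
      (∀ β ∈ Φ, ‖β‖ = ‖θp‖ → θp - β ∈ AddSubmonoid.closure (Δ : Set V)) ∧
      (α = θp ∨ ∃ γ ∈ Δ, θp + γ ∈ Φ ∧ α = sref γ (θp + γ))) := by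
  classical
  set P : AddSubmonoid V := AddSubmonoid.closure (Δ : Set V) with hPdef
  ------------------------------------------------------------------
  -- Part 1 : the linear functional F (height) and positivity theory
  ------------------------------------------------------------------
  have hPle : ∀ x ∈ P, x ∈ Submodule.span ℝ (Δ : Set V) := by
    intro x hx
    refine AddSubmonoid.closure_induction (fun y hy => Submodule.subset_span hy) ?_ ?_ hx
    · exact Submodule.zero_mem _
    · intro a b _ _ ha hb; exact Submodule.add_mem _ ha hb
  have hspanΔ : Submodule.span ℝ (Δ : Set V) = ⊤ := by
    rw [eq_top_iff, ← hspan, Submodule.span_le]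
    intro β hβ
    rcases hΔgen β hβ with h | h
    · exact hPle β h
    · have := hPle _ h
      simpa using Submodule.neg_mem _ this
  let b : Module.Basis {x : V // x ∈ Δ} ℝ V :=
    Module.Basis.mk hΔind (by rw [Subtype.range_coe_subtype]; exact le_of_eq hspanΔ.symm)
  have hb' : ∀ (y : V) (hy : y ∈ Δ), y = b ⟨y, hy⟩ := by
    intro y hy
    have := Module.Basis.mk_apply hΔind (by rw [Subtype.range_coe_subtype]; exact le_of_eq hspanΔ.symm)
      (⟨y, hy⟩ : {x : V // x ∈ Δ})
    exact this.symm
  have hrepr : ∀ (y : V) (hy : y ∈ Δ), b.repr y = Finsupp.single ⟨y, hy⟩ 1 := by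
    intro y hy
    have e := congrArg (fun v => b.repr v) (hb' y hy)
    rw [e, Module.Basis.repr_self]
  let F : V →ₗ[ℝ] ℝ := ∑ i : {x : V // x ∈ Δ}, b.coord i
  have hFapp : ∀ x, F x = ∑ i : {x : V // x ∈ Δ}, b.repr x i := by
    intro x; simp [F, Module.Basis.coord_apply]
  have hFδ : ∀ δ ∈ Δ, F δ = 1 := by
    intro δ hδ
    rw [hFapp]
    simp only [hrepr δ hδ]
    rw [Finset.sum_eq_single (⟨δ, hδ⟩ : {x : V // x ∈ Δ})]
    · simp
    · intro j _ hj; exact Finsupp.single_eq_of_ne hj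
    · intro h; exact absurd (Finset.mem_univ _) h
  have hcoordnat : ∀ x ∈ P, ∀ i, ∃ m : ℕ, b.repr x i = m := by
    intro x hx
    refine AddSubmonoid.closure_induction ?_ ?_ ?_ hx
    · intro y hy i
      rw [hrepr y hy]
      rcases eq_or_ne i ⟨y, hy⟩ with h | h
      · exact ⟨1, by simp [h]⟩
      · exact ⟨0, by rw [Finsupp.single_eq_of_ne h]; simp⟩
    · intro i; exact ⟨0, by simp⟩
    · intro a c _ _ ha hc i
      obtain ⟨m, hm⟩ := ha i; obtain ⟨k, hk⟩ := hc i
      exact ⟨m + k, by rw [map_add, Finsupp.add_apply, hm, hk]; push_cast; ring⟩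
  have hcoord : ∀ x ∈ P, ∀ i, 0 ≤ b.repr x i := by
    intro x hx i; obtain ⟨m, hm⟩ := hcoordnat x hx i; rw [hm]; positivity
  have hFnat : ∀ x ∈ P, ∃ m : ℕ, F x = m := by
    intro x hx
    refine AddSubmonoid.closure_induction ?_ ⟨0, by simp⟩ ?_ hx
    · intro y hy; exact ⟨1, by simpa using hFδ y hy⟩
    · rintro a c _ _ ⟨m, hm⟩ ⟨k, hk⟩
      exact ⟨m + k, by rw [map_add, hm, hk]; push_cast; ring⟩
  have hFnonneg : ∀ x ∈ P, 0 ≤ F x := by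
    intro x hx; obtain ⟨m, hm⟩ := hFnat x hx; rw [hm]; positivity
  have hFpos : ∀ x ∈ P, x ≠ 0 → 0 < F x := by
    intro x hx hne
    have h1 : b.repr x ≠ 0 := by
      intro h; apply hne
      have := congrArg b.repr.symm h; simpa using this
    obtain ⟨i, hi⟩ := Finsupp.ne_iff.1 h1
    rw [hFapp]
    refine Finset.sum_pos' (fun j _ => hcoord x hx j) ⟨i, Finset.mem_univ i, ?_⟩
    exact lt_of_le_of_ne (hcoord x hx i) (Ne.symm hi)
  have hF1 : ∀ x ∈ P, F x = 1 → x ∈ Δ := by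
    intro x hx h1
    choose n hn using hcoordnat x hx
    have hs : ∑ i, (n i : ℝ) = 1 := by
      rw [← h1, hFapp]; exact Finset.sum_congr rfl (fun i _ => (hn i).symm)
    have hsn : ∑ i, n i = 1 := by exact_mod_cast hs
    have hex : ∃ i0, n i0 ≠ 0 := by
      by_contra h; push_neg at h
      rw [Finset.sum_eq_zero (fun i _ => h i)] at hsn; exact one_ne_zero hsn.symm
    obtain ⟨i0, hi0⟩ := hex
    have h2 : n i0 + ∑ j ∈ Finset.univ.erase i0, n j = 1 := by
      rw [Finset.add_sum_erase _ _ (Finset.mem_univ i0)]; exact hsn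
    have hni0 : n i0 = 1 := by omega
    have hrest : ∀ j, j ≠ i0 → n j = 0 := by
      intro j hj
      have hz : ∑ j ∈ Finset.univ.erase i0, n j = 0 := by omega
      exact (Finset.sum_eq_zero_iff).1 hz j (by simp [hj])
    have hx2 : x = b i0 := by
      rw [← b.sum_repr x, Finset.sum_eq_single i0]
      · rw [hn i0, hni0]; simp
      · intro j _ hj; rw [hn j, hrest j hj]; simp
      · intro h; exact absurd (Finset.mem_univ _) h
    rw [hx2, Module.Basis.mk_apply]; exact i0.2
  ------------------------------------------------------------------
  -- Part 2 : basic root-system lemmas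
  ------------------------------------------------------------------
  have hΦ0 : ∀ β ∈ Φ, β ≠ (0:V) := fun β hβ h => h0 (h ▸ hβ)
  have ip : ∀ β ∈ Φ, (0:ℝ) < ⟪β,β⟫ := fun β hβ => rsp (hΦ0 β hβ)
  have hsval : ∀ a ∈ Φ, ∀ (τ:V) (c:ℝ), 2*⟪τ,a⟫ = c*⟪a,a⟫ → sref a τ = τ - c • a :=
    fun a ha τ c h => sref_eq a τ c (hΦ0 a ha) h
  have hnegΦ : ∀ β ∈ Φ, -β ∈ Φ := by
    intro β hβ
    have h2 : sref β β = β - (2:ℝ) • β := hsval β hβ β 2 (by ring)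
    have h3 : β - (2:ℝ) • β = -β := by module
    have := hrefl β hβ β hβ
    rwa [h2, h3] at this
  have hcz : ∀ a ∈ Φ, ∀ c ∈ Φ, ∃ z:ℤ, 2*⟪c,a⟫ = z*⟪a,a⟫ := by
    intro a ha c hc
    obtain ⟨z, hz⟩ := hint a ha c hc
    refine ⟨z, ?_⟩
    rw [cpair] at hz
    have := (ip a ha).ne'
    field_simp at hz
    linarith
  have hkey : ∀ β ∈ Φ, ∀ τ ∈ Φ, τ ≠ β → τ ≠ -β → 0 < ⟪τ,β⟫ →
      ∃ p q : ℤ, 1 ≤ p ∧ 1 ≤ q ∧ p*q ≤ 3 ∧ 2*⟪τ,β⟫ = p*⟪β,β⟫ ∧ 2*⟪τ,β⟫ = q*⟪τ,τ⟫ ∧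
        τ - β ∈ Φ := by
    intro β hβ τ hτ hne1 hne2 hpos
    obtain ⟨p, hp⟩ := hcz β hβ τ hτ
    obtain ⟨q, hq'⟩ := hcz τ hτ β hβ
    have hq : 2*⟪τ,β⟫ = q*⟪τ,τ⟫ := by rwa [real_inner_comm] at hq'
    have hβp := ip β hβ
    have hτp := ip τ hτ
    have hp1 : 1 ≤ p := by
      by_contra h
      push_neg at h
      have hple : p ≤ 0 := by omega
      have : (p:ℝ) ≤ 0 := by exact_mod_cast hple
      nlinarith
    have hq1 : 1 ≤ q := by
      by_contra h
      push_neg at h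
      have hqle : q ≤ 0 := by omega
      have : (q:ℝ) ≤ 0 := by exact_mod_cast hqle
      nlinarith
    have hcs : ⟪τ,β⟫ < ‖τ‖ * ‖β‖ := by
      rw [inner_lt_norm_mul_iff_real]
      intro h
      have hb0 : ‖β‖ ≠ 0 := norm_ne_zero_iff.mpr (hΦ0 β hβ)
      have : τ = (‖β‖⁻¹ * ‖τ‖) • β := by
        have := congrArg (fun v => ‖β‖⁻¹ • v) h
        simpa [smul_smul, inv_mul_cancel₀ hb0] using this
      rcases hred β hβ (‖β‖⁻¹ * ‖τ‖) (by rw [← this]; exact hτ) with h1 | h1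
      · rw [h1, one_smul] at this; exact hne1 this
      · rw [h1, neg_smul, one_smul] at this; exact hne2 this
    have hsq : 4*⟪τ,β⟫^2 < 4*(⟪τ,τ⟫*⟪β,β⟫) := by
      have h2 : ⟪τ,β⟫^2 < (‖τ‖*‖β‖)^2 := by
        apply sq_lt_sq' _ hcs
        nlinarith [norm_nonneg τ, norm_nonneg β]
      have h3 : (‖τ‖*‖β‖)^2 = ⟪τ,τ⟫*⟪β,β⟫ := by
        rw [real_inner_self_eq_norm_sq, real_inner_self_eq_norm_sq]; ring
      nlinarith
    have hpq : p*q ≤ 3 := by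
      have h5 : (p:ℝ)*q*(⟪β,β⟫*⟪τ,τ⟫) = 4*⟪τ,β⟫^2 := by nlinarith [hp, hq]
      have h4 : (p:ℝ)*q < 4 := by nlinarith
      have : p*q < 4 := by exact_mod_cast h4
      omega
    have hmem : τ - β ∈ Φ := by
      rcases eq_or_lt_of_le hp1 with h1 | h1
      · have : sref β τ = τ - (1:ℝ) • β := hsval β hβ τ 1 (by rw [hp, ← h1]; push_cast; ring)
        have h2 := hrefl β hβ τ hτ
        rw [this, one_smul] at h2
        exact h2
      · have hq2 : q = 1 := by nlinarith
        have : sref τ β = β - (1:ℝ) • τ :=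
          hsval τ hτ β 1 (by rw [real_inner_comm] at hq; rw [hq, hq2]; push_cast; ring)
        have h2 := hrefl τ hτ β hβ
        rw [this, one_smul] at h2
        have := hnegΦ _ h2
        simpa using this
    exact ⟨p, q, hp1, hq1, hpq, hp, hq, hmem⟩
  ------------------------------------------------------------------
  -- Part 3 : positivity lemmas mixing P and Φ
  ------------------------------------------------------------------
  have hd1 : ∀ x ∈ Φ, x ∈ P → -x ∈ P → False := by
    intro x hx h1 h2
    have := hFpos x h1 (hΦ0 x hx)
    have h3 := hFpos (-x) h2 (by simpa using hΦ0 x hx ∘ neg_eq_zero.mp)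
    rw [map_neg] at h3
    linarith
  have hPmem : ∀ δ ∈ Δ, δ ∈ P := fun δ hδ => AddSubmonoid.subset_closure hδ
  have hsd : ∀ δ ∈ Δ, ∀ δ' ∈ Δ, δ ≠ δ' → δ - δ' ∉ Φ := by
    intro δ hδ δ' hδ' hne hmem
    have key : ∀ a ∈ Δ, ∀ c ∈ Δ, a ≠ c → a - c ∉ P := by
      intro a ha c hc hac hP
      have h1 : b.repr (a - c) ⟨c, hc⟩ = -1 := by
        rw [map_sub, Finsupp.sub_apply, hrepr a ha, hrepr c hc]
        rw [Finsupp.single_eq_of_ne (by simp [Ne.symm hac]), Finsupp.single_eq_same]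
        ring
      have := hcoord _ hP ⟨c, hc⟩
      rw [h1] at this
      linarith
    rcases hΔgen _ hmem with h | h
    · exact key δ hδ δ' hδ' hne h
    · rw [neg_sub] at h
      exact key δ' hδ' δ hδ (Ne.symm hne) h
  have hFle : ∀ β ∈ Φ, F β ≤ F θ := by
    intro β hβ
    have := hFnonneg _ (hθmax β hβ)
    rw [map_sub] at this
    linarith
  have hρδ : ∀ δ ∈ Δ, 2*⟪ρ,δ⟫ = ⟪δ,δ⟫ := by
    intro δ hδ
    have hz := hρ δ hδ
    rw [cpair] at hz
    have := (ip δ (hΔΦ hδ)).ne'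
    field_simp at hz
    linarith
  have hdomP : ∀ (σ:V), (∀ δ ∈ Δ, 0 ≤ ⟪σ,δ⟫) → ∀ x ∈ P, 0 ≤ ⟪σ,x⟫ := by
    intro σ hσ x hx
    refine AddSubmonoid.closure_induction (fun y hy => hσ y hy) ?_ ?_ hx
    · simp
    · intro u v _ _ hu hv
      rw [inner_add_right]
      linarith
  have hposδ : ∀ β ∈ Φ, β ∈ P → ∃ δ ∈ Δ, 0 < ⟪β,δ⟫ := by
    intro β hβ hβP
    by_contra h
    push_neg at h
    have h2 : ∀ δ ∈ Δ, 0 ≤ ⟪-β,δ⟫ := by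
      intro δ hδ; rw [inner_neg_left]; linarith [h δ hδ]
    have := hdomP (-β) h2 β hβP
    rw [inner_neg_left] at this
    linarith [ip β hβ]
  have hdompos : ∀ σ ∈ Φ, (∀ δ ∈ Δ, 0 ≤ ⟪σ,δ⟫) → σ ∈ P := by
    intro σ hσ hdom
    rcases hΔgen σ hσ with h | h
    · exact h
    · have := hdomP σ hdom (-σ) h
      rw [inner_neg_right] at this
      linarith [ip σ hσ]
  ------------------------------------------------------------------
  -- Part 4 : dominance, the highest root, raising
  ------------------------------------------------------------------
  have hθdom : ∀ δ ∈ Δ, 0 ≤ ⟪θ,δ⟫ := by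
    intro δ hδ
    by_contra h
    push_neg at h
    have hδΦ : δ ∈ Φ := hΔΦ hδ
    have hθδ : θ ≠ δ := by
      intro he; rw [he] at h; linarith [ip δ hδΦ]
    have hθδ' : θ ≠ -δ := by
      intro he
      have h2 := hθmax δ hδΦ
      rw [he] at h2
      have h3 : -δ - δ = -((2:ℕ) • δ) := by push_cast; module
      rw [h3] at h2
      have := hFnonneg _ h2
      rw [map_neg, map_nsmul, hFδ δ hδ] at this
      norm_num at this
    have hpos : 0 < ⟪θ,-δ⟫ := by rw [inner_neg_right]; linarith
    obtain ⟨p, q, _, _, _, _, _, hmem⟩ :=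
      hkey (-δ) (hnegΦ δ hδΦ) θ hθΦ hθδ' (by simpa using hθδ) hpos
    have h4 : θ - -δ = θ + δ := by module
    rw [h4] at hmem
    have h5 := hθmax _ hmem
    have h6 : θ - (θ + δ) = -δ := by module
    rw [h6] at h5
    have := hFnonneg _ h5
    rw [map_neg, hFδ δ hδ] at this
    linarith
  have hθP : θ ∈ P := hdompos θ hθΦ hθdom
  have hraise : ∀ τ ∈ Φ, ∃ σ ∈ Φ, (∀ δ ∈ Δ, 0 ≤ ⟪σ,δ⟫) ∧ ⟪σ,σ⟫ = ⟪τ,τ⟫ ∧ σ - τ ∈ P := by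
    intro τ hτ
    set S : Finset V := Φ.filter (fun σ => σ - τ ∈ P ∧ ⟪σ,σ⟫ = ⟪τ,τ⟫) with hS
    have hτS : τ ∈ S := by
      rw [hS, Finset.mem_filter]
      exact ⟨hτ, by simpa using P.zero_mem, rfl⟩
    obtain ⟨σ, hσS, hσmax⟩ := Finset.exists_max_image S F ⟨τ, hτS⟩
    rw [hS, Finset.mem_filter] at hσS
    obtain ⟨hσΦ, hσP, hσn⟩ := hσS
    refine ⟨σ, hσΦ, ?_, hσn, hσP⟩
    by_contra h
    push_neg at h
    obtain ⟨δ, hδ, hlt⟩ := h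
    have hδΦ : δ ∈ Φ := hΔΦ hδ
    obtain ⟨z, hz⟩ := hcz δ hδΦ σ hσΦ
    have hzneg : z ≤ -1 := by
      by_contra h2
      push_neg at h2
      have : (0:ℤ) ≤ z := by omega
      have : (0:ℝ) ≤ z := by exact_mod_cast this
      nlinarith [ip δ hδΦ]
    set m : ℕ := (-z).toNat with hm
    have hmz : (m:ℝ) = -(z:ℝ) := by
      rw [hm]
      have : ((-z).toNat : ℤ) = -z := Int.toNat_of_nonneg (by omega)
      push_cast at this ⊢
      exact_mod_cast this
    have hm1 : 1 ≤ m := by omega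
    have hσ' : sref δ σ = σ - (z:ℝ) • δ := hsval δ hδΦ σ z hz
    have hσ'Φ : σ - (z:ℝ) • δ ∈ Φ := by rw [← hσ']; exact hrefl δ hδΦ σ hσΦ
    have hmδ : σ - (z:ℝ) • δ = σ + m • δ := by
      rw [← Nat.cast_smul_eq_nsmul ℝ m δ, hmz]; module
    have hσ'S : σ + m • δ ∈ S := by
      rw [hS, Finset.mem_filter]
      refine ⟨by rwa [hmδ] at hσ'Φ, ?_, ?_⟩
      · have : σ + m • δ - τ = (σ - τ) + m • δ := by module
        rw [this]
        exact P.add_mem hσP (AddSubmonoid.nsmul_mem P (hPmem δ hδ) m)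
      · have := sref_inner_self' δ σ
        rw [hσ', hmδ] at this
        rw [this]
        exact hσn
    have hFσ' : F (σ + m • δ) = F σ + m := by
      rw [map_add, map_nsmul, hFδ δ hδ]
      simp
    have := hσmax _ hσ'S
    rw [hFσ'] at this
    have : (m:ℝ) ≤ 0 := by linarith
    have : (1:ℝ) ≤ 0 := le_trans (by exact_mod_cast hm1) this
    linarith
  have hθtop : ∀ τ ∈ Φ, ⟪τ,τ⟫ ≤ ⟪θ,θ⟫ := by
    intro τ hτ
    obtain ⟨σ, hσΦ, hσdom, hσn, _⟩ := hraise τ hτ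
    have h1 := hdomP θ hθdom _ (hθmax σ hσΦ)
    have h2 := hdomP σ hσdom _ (hθmax σ hσΦ)
    rw [inner_sub_right] at h1 h2
    have h3 : ⟪σ,θ⟫ = ⟪θ,σ⟫ := real_inner_comm θ σ
    linarith
  have hθs : ∀ σ ∈ Φ, (∀ δ ∈ Δ, 0 ≤ ⟪σ,δ⟫) → ⟪σ,σ⟫ ≤ ⟪θ,σ⟫ := by
    intro σ hσΦ hdom
    have h2 := hdomP σ hdom _ (hθmax σ hσΦ)
    rw [inner_sub_right] at h2
    have h3 : ⟪σ,θ⟫ = ⟪θ,σ⟫ := real_inner_comm θ σ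
    linarith
  have hhalf : ∀ σ ∈ Φ, (∀ δ ∈ Δ, 0 ≤ ⟪σ,δ⟫) → σ ≠ θ →
      2*⟪θ,σ⟫ = ⟪θ,θ⟫ ∧ (θ - σ ∈ Φ) ∧ ∃ k:ℤ, (k = 2 ∨ k = 3) ∧ ⟪θ,θ⟫ = k*⟪σ,σ⟫ := by
    intro σ hσΦ hdom hneθ
    have hσP : σ ∈ P := hdompos σ hσΦ hdom
    have h1 : ⟪σ,σ⟫ ≤ ⟪θ,σ⟫ := hθs σ hσΦ hdom
    have hpos : 0 < ⟪θ,σ⟫ := lt_of_lt_of_le (ip σ hσΦ) h1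
    have hne2 : θ ≠ -σ := by
      intro he
      exact hd1 σ hσΦ hσP (he ▸ hθP)
    obtain ⟨p, q, hp1, hq1, hpq, hp, hq, hmem⟩ := hkey σ hσΦ θ hθΦ (fun h => hneθ h.symm) hne2 hpos
    have hp2 : 2 ≤ p := by
      by_contra h2
      push_neg at h2
      have hpe : p = 1 := by omega
      rw [hpe] at hp
      push_cast at hp
      nlinarith [ip σ hσΦ]
    have hq2 : q = 1 := by
      by_contra hq2'
      have h6 : 2 ≤ q := by omega
      have h7 : (2:ℤ)*2 ≤ p*q := mul_le_mul hp2 h6 (by norm_num) (by omega)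
      omega
    rw [hq2, mul_one] at hpq
    rw [hq2] at hq
    push_cast at hq
    refine ⟨by linarith, hmem, p, by omega, by nlinarith [hp, hq]⟩
  have hnonorth : ∀ β ∈ Φ, (∀ δ ∈ Δ, 0 ≤ ⟪β,δ⟫) → ∀ β' ∈ Φ, (∀ δ ∈ Δ, 0 ≤ ⟪β',δ⟫) →
      β ≠ β' → 0 < ⟪β,β'⟫ := by
    intro β hβΦ hβdom β' hβ'Φ hβ'dom hne
    have hβP := hdompos β hβΦ hβdom
    have hβ'P := hdompos β' hβ'Φ hβ'dom
    have hge : 0 ≤ ⟪β,β'⟫ := hdomP β hβdom β' hβ'P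
    rcases lt_or_eq_of_le hge with h | h
    · exact h
    exfalso
    have horth : ⟪β,β'⟫ = 0 := h.symm
    have hθβ : ⟪β,β⟫ ≤ ⟪θ,β⟫ := hθs β hβΦ hβdom
    have hθβ' : ⟪β',β'⟫ ≤ ⟪θ,β'⟫ := hθs β' hβ'Φ hβ'dom
    have horth' : ⟪β',β⟫ = 0 := by rw [real_inner_comm]; exact horth
    have hβθ : β ≠ θ := by
      intro he
      rw [← he] at hθβ'
      rw [horth] at hθβ'
      linarith [ip β' hβ'Φ]
    have hβ'θ : β' ≠ θ := by
      intro he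
      rw [← he] at hθβ
      rw [horth'] at hθβ
      linarith [ip β hβΦ]
    obtain ⟨hhβ, hηΦ, _⟩ := hhalf β hβΦ hβdom hβθ
    obtain ⟨hhβ', _, _⟩ := hhalf β' hβ'Φ hβ'dom hβ'θ
    set T := ⟪θ,θ⟫ with hT
    have hTpos := ip θ hθΦ
    rcases eq_or_ne (θ - β) β' with hcase | hcase
    · -- θ = β + β'
      have hθe : θ = β + β' := by
        have h9 := hcase
        rw [sub_eq_iff_eq_add] at h9
        rw [h9]; module
      have hββ : ⟪β,β⟫ = T/2 := by
        have h2 : ⟪θ,β⟫ = ⟪β,β⟫ := by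
          rw [hθe, inner_add_left, horth']
          ring
        linarith
      have hβ'β' : ⟪β',β'⟫ = T/2 := by
        have h2 : ⟪θ,β'⟫ = ⟪β',β'⟫ := by
          rw [hθe, inner_add_left, horth]
          ring
        linarith
      have hsθ : sref β' θ = θ - (2:ℝ) • β' := by
        apply hsval β' hβ'Φ θ 2
        linarith
      have hdd : θ - (2:ℝ) • β' = β - β' := by rw [hθe]; module
      have hmem2 : β - β' ∈ Φ := by
        have := hrefl β' hβ'Φ θ hθΦ
        rwa [hsθ, hdd] at this
      rcases hΔgen _ hmem2 with hc | hc
      · have := hdomP β' hβ'dom _ hc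
        rw [inner_sub_right, horth'] at this
        linarith [ip β' hβ'Φ]
      · rw [neg_sub] at hc
        have := hdomP β hβdom _ hc
        rw [inner_sub_right, horth] at this
        linarith [ip β hβΦ]
    · -- general case
      have hηP : θ - β ∈ P := hθmax β hβΦ
      have hne2 : θ - β ≠ -β' := by
        intro he
        exact hd1 β' hβ'Φ hβ'P (he ▸ hηP)
      have hηβ' : 0 < ⟪θ - β, β'⟫ := by
        rw [inner_sub_left, horth]
        linarith [ip β' hβ'Φ]
      obtain ⟨_, _, _, _, _, _, _, hζΦ⟩ := hkey β' hβ'Φ (θ - β) hηΦ hcase hne2 hηβ'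
      have hζ0 := ip _ hζΦ
      have e1 : ⟪θ - β - β', θ - β - β'⟫ =
          T - 2*⟪θ,β⟫ - 2*⟪θ,β'⟫ + ⟪β,β⟫ + ⟪β',β'⟫ + 2*⟪β,β'⟫ := by
        simp only [inner_sub_left, inner_sub_right]
        rw [real_inner_comm β θ, real_inner_comm β' θ, real_inner_comm β' β]
        ring
      rw [e1, horth] at hζ0
      linarith
  have huniq : ∀ β ∈ Φ, (∀ δ ∈ Δ, 0 ≤ ⟪β,δ⟫) → ∀ β' ∈ Φ, (∀ δ ∈ Δ, 0 ≤ ⟪β',δ⟫) →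
      ⟪β,β⟫ = ⟪β',β'⟫ → β = β' := by
    intro β hβΦ hβdom β' hβ'Φ hβ'dom hnorm
    by_contra hne
    have hβP := hdompos β hβΦ hβdom
    have hβ'P := hdompos β' hβ'Φ hβ'dom
    have hpos := hnonorth β hβΦ hβdom β' hβ'Φ hβ'dom hne
    have hne2 : β ≠ -β' := by
      intro he
      exact hd1 β' hβ'Φ hβ'P (he ▸ hβP)
    obtain ⟨p, q, hp1, hq1, hpq, hp, hq, hmem⟩ := hkey β' hβ'Φ β hβΦ hne hne2 hpos
    have hpq' : p = q := by
      rw [hnorm] at hq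
      have h2 : (p:ℝ)*⟪β',β'⟫ = (q:ℝ)*⟪β',β'⟫ := by linarith
      have h3 : (p:ℝ) = q := mul_right_cancel₀ (ip β' hβ'Φ).ne' h2
      exact_mod_cast h3
    have hpe : p = 1 := by
      by_contra hp2'
      have h6 : 2 ≤ p := by omega
      have h7 : (2:ℤ)*2 ≤ p*q := mul_le_mul h6 (by omega) (by norm_num) (by omega)
      omega
    rw [hpe] at hp
    push_cast at hp
    have hcomm : ⟪β',β⟫ = ⟪β,β'⟫ := by rw [real_inner_comm]
    rcases hΔgen _ hmem with hc | hc
    · have h10 := hdomP β' hβ'dom _ hc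
      rw [inner_sub_right] at h10
      linarith [ip β' hβ'Φ, hcomm]
    · rw [neg_sub] at hc
      have h10 := hdomP β hβdom _ hc
      rw [inner_sub_right] at h10
      linarith [ip β hβΦ, hnorm]
  ------------------------------------------------------------------
  -- Part 5 : the highest short root θp
  ------------------------------------------------------------------
  obtain ⟨τ₀, hτ₀Φ, hτ₀min⟩ := Finset.exists_min_image Φ (fun β => ⟪β,β⟫) ⟨α, hα⟩
  obtain ⟨θp, hθpΦ, hθpdom, hθpn, hθpτ₀⟩ := hraise τ₀ hτ₀Φ
  have hθpmin : ∀ β ∈ Φ, ⟪θp,θp⟫ ≤ ⟪β,β⟫ := by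
    intro β hβ
    rw [hθpn]
    exact hτ₀min β hβ
  have hθpP : θp ∈ P := hdompos θp hθpΦ hθpdom
  have hclass : ∀ β ∈ Φ, ⟪β,β⟫ = ⟪θp,θp⟫ → θp - β ∈ P := by
    intro β hβ hn
    obtain ⟨σ, hσΦ, hσdom, hσn, hσβ⟩ := hraise β hβ
    have hσθp : σ = θp := huniq σ hσΦ hσdom θp hθpΦ hθpdom (by rw [hσn, hn])
    rwa [hσθp] at hσβ
  have hrat : ⟪θ,θ⟫ ≤ 3*⟪θp,θp⟫ := by
    rcases eq_or_ne θp θ with he | hne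
    · rw [he]; linarith [ip θ hθΦ]
    · obtain ⟨_, _, k, hk23, hkn⟩ := hhalf θp hθpΦ hθpdom hne
      have : (k:ℝ) ≤ 3 := by rcases hk23 with h | h <;> (rw [h]; norm_num)
      nlinarith [hθpmin θ hθΦ, ip θp hθpΦ]
  have htwo : ∀ σ ∈ Φ, (∀ δ ∈ Δ, 0 ≤ ⟪σ,δ⟫) → ⟪σ,σ⟫ = ⟪θ,θ⟫ ∨ ⟪σ,σ⟫ = ⟪θp,θp⟫ := by
    intro σ hσΦ hσdom
    by_contra h
    push_neg at h
    obtain ⟨hn1, hn2⟩ := h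
    have hlt1 : ⟪θp,θp⟫ < ⟪σ,σ⟫ := lt_of_le_of_ne (hθpmin σ hσΦ) (Ne.symm hn2)
    have hlt2 : ⟪σ,σ⟫ < ⟪θ,θ⟫ := lt_of_le_of_ne (hθtop σ hσΦ) hn1
    have hσθ : σ ≠ θ := fun he => hn1 (by rw [he])
    have hθpθ : θp ≠ θ := fun he => by rw [he] at hlt1; linarith
    obtain ⟨_, _, k1, hk1e, hk1⟩ := hhalf σ hσΦ hσdom hσθ
    obtain ⟨_, _, k2, hk2e, hk2⟩ := hhalf θp hθpΦ hθpdom hθpθ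
    have hk12 : k1 = 2 ∧ k2 = 3 := by
      have h1 : (k1:ℝ)*⟪σ,σ⟫ = (k2:ℝ)*⟪θp,θp⟫ := by linarith
      have hk1p : (0:ℝ) < k1 := by rcases hk1e with h | h <;> (rw [h]; norm_num)
      have hlt : (k1:ℝ) < k2 := by nlinarith [ip θp hθpΦ]
      have : k1 < k2 := by exact_mod_cast hlt
      constructor <;> omega
    have h32 : 2*⟪σ,σ⟫ = 3*⟪θp,θp⟫ := by
      obtain ⟨e1, e2⟩ := hk12
      rw [e1] at hk1; rw [e2] at hk2
      push_cast at hk1 hk2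
      linarith
    have hσθp : σ ≠ θp := fun he => by rw [he] at hlt1; linarith
    have hσP := hdompos σ hσΦ hσdom
    have hpos := hnonorth σ hσΦ hσdom θp hθpΦ hθpdom hσθp
    have hne2 : σ ≠ -θp := by
      intro he
      exact hd1 θp hθpΦ hθpP (he ▸ hσP)
    obtain ⟨p, q, hp1, hq1, hpq, hp, hq, _⟩ := hkey θp hθpΦ σ hσΦ hσθp hne2 hpos
    have h23 : 2*p = 3*q := by
      have h2 : (p:ℝ)*⟪θp,θp⟫ = (q:ℝ)*⟪σ,σ⟫ := by linarith
      have h3 : 2*((p:ℝ)*⟪θp,θp⟫) = (q:ℝ)*(2*⟪σ,σ⟫) := by linarith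
      rw [h32] at h3
      have h4 : (2*(p:ℝ) - 3*q)*⟪θp,θp⟫ = 0 := by linarith
      have h5 : 2*(p:ℝ) - 3*(q:ℝ) = 0 := by
        rcases mul_eq_zero.1 h4 with h | h
        · exact h
        · exact absurd h (ip θp hθpΦ).ne'
      have : (2*p : ℝ) = ((3*q : ℤ) : ℝ) := by push_cast; linarith
      exact_mod_cast this
    rcases (by omega : q = 1 ∨ 2 ≤ q) with hqc | hqc
    · omega
    · have hp3 : 3 ≤ p := by omega
      nlinarith
  ------------------------------------------------------------------
  -- Part 6 : the negative case
  ------------------------------------------------------------------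
  have Hneg : ∀ n:ℕ, ∀ γ, γ ∈ Φ → γ ∈ P → F γ ≤ (n:ℝ) →
      (∀ β ∈ Φ, ⟪ρ - γ, β⟫ ≠ 0) → γ ∈ Δ := by
    intro n
    induction n with
    | zero =>
      intro γ hγΦ hγP hFb _
      exact absurd hFb (by push_cast; linarith [hFpos γ hγP (hΦ0 γ hγΦ)])
    | succ n ih =>
      intro γ hγΦ hγP hFb hregγ
      by_cases hγΔ : γ ∈ Δ
      · exact hγΔ
      exfalso
      obtain ⟨δ, hδΔ, hδpos⟩ := hposδ γ hγΦ hγP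
      have hδΦ : δ ∈ Φ := hΔΦ hδΔ
      have hδp := ip δ hδΦ
      have hγδ : γ ≠ δ := fun h => hγΔ (h ▸ hδΔ)
      have hγδ' : γ ≠ -δ := by
        intro h
        rw [h, inner_neg_left] at hδpos
        linarith
      obtain ⟨p, q, hp1, hq1, hpq, hp, hq, hmem⟩ := hkey δ hδΦ γ hγΦ hγδ hγδ' hδpos
      have hρδ' := hρδ δ hδΔ
      have hp2 : 2 ≤ p := by
        by_contra h2
        push_neg at h2
        have hpe : p = 1 := by omega
        apply hregγ δ hδΦ
        rw [inner_sub_left]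
        rw [hpe] at hp
        push_cast at hp
        linarith
      have hq2 : q = 1 := by
        by_contra hq2'
        have h6 : 2 ≤ q := by omega
        have h7 : (2:ℤ)*2 ≤ p*q := mul_le_mul hp2 h6 (by norm_num) (by omega)
        omega
      rw [hq2, mul_one] at hpq
      have hγn : ⟪γ,γ⟫ = (p:ℝ)*⟪δ,δ⟫ := by
        rw [hq2] at hq
        push_cast at hq
        linarith
      have hp3 : p = 2 ∨ p = 3 := by omega
      set μ : V := γ - ((p:ℝ)-1) • δ with hμdef
      have hμΦ : μ ∈ Φ := by
        rcases hp3 with hpe | hpe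
        · have : μ = γ - δ := by rw [hμdef, hpe]; push_cast; module
          rw [this]; exact hmem
        · have hγδΦ : γ - δ ∈ Φ := hmem
          have h1 : 0 < ⟪γ - δ, δ⟫ := by
            rw [inner_sub_left]
            rw [hpe] at hp; push_cast at hp
            linarith
          have h2 : γ - δ ≠ δ := by
            intro he
            have : γ = (2:ℝ) • δ := by
              rw [sub_eq_iff_eq_add] at he
              rw [he]; module
            rcases hred δ hδΦ 2 (by rw [← this]; exact hγΦ) with h | h <;> norm_num at h
          have h3 : γ - δ ≠ -δ := by
            intro he
            have : γ = 0 := by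
              rw [sub_eq_iff_eq_add] at he
              rw [he]; module
            exact hΦ0 γ hγΦ this
          obtain ⟨_, _, _, _, _, _, _, hmem2⟩ := hkey δ hδΦ (γ - δ) hγδΦ h2 h3 h1
          have : μ = γ - δ - δ := by rw [hμdef, hpe]; push_cast; module
          rw [this]; exact hmem2
      have hμ0 : μ ≠ 0 := hΦ0 μ hμΦ
      have hFμ : F μ = F γ - ((p:ℝ)-1) := by
        rw [hμdef, map_sub, map_smul, hFδ δ hδΔ]
        simp
      have hμP : μ ∈ P := by
        rcases hΔgen μ hμΦ with h | h
        · exact h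
        · exfalso
          obtain ⟨m, hm⟩ := hFnat γ hγP
          obtain ⟨k, hk⟩ := hFnat _ h
          rw [map_neg, hFμ] at hk
          have hm0 : m ≠ 0 := by
            intro h'
            rw [h'] at hm
            have := hFpos γ hγP (hΦ0 γ hγΦ)
            rw [hm] at this
            norm_num at this
          have hk0 : k ≠ 0 := by
            intro h'
            rw [h'] at hk
            have h5 := hFpos (-μ) h (by simpa using hμ0)
            rw [map_neg] at h5
            push_cast at hk
            linarith
          have hpmk : (p:ℝ) = (m:ℝ) + (k:ℝ) + 1 := by
            rw [hm] at hk
            push_cast at hk ⊢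
            linarith
          have hint2 : p = (m:ℤ) + (k:ℤ) + 1 := by exact_mod_cast hpmk
          have hme : m = 1 := by omega
          apply hγΔ
          apply hF1 γ hγP
          rw [hm, hme]
          norm_num
      have hFμb : F μ ≤ (n:ℝ) := by
        rw [hFμ]
        push_cast at hFb ⊢
        have : (2:ℝ) ≤ p := by exact_mod_cast hp2
        linarith
      have hsρ : sref δ ρ = ρ - (1:ℝ) • δ := hsval δ hδΦ ρ 1 (by rw [hρδ']; ring)
      have hsγ : sref δ γ = γ - (p:ℝ) • δ := hsval δ hδΦ γ p hp
      have hregμ : ∀ β ∈ Φ, ⟪ρ - μ, β⟫ ≠ 0 := by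
        intro β hβ hzero
        apply hregγ (sref δ β) (hrefl δ hδΦ β hβ)
        have hid : sref δ (ρ - γ) = ρ - μ := by
          rw [map_sub, hsρ, hsγ, hμdef]; module
        rw [← sref_inner' δ (ρ - γ) β, hid]
        exact hzero
      have hμΔ : μ ∈ Δ := ih μ hμΦ hμP hFμb hregμ
      -- endgame
      have hμδ : μ ≠ δ := by
        intro he
        have hγp : γ = (p:ℝ) • δ := by
          have : γ = μ + ((p:ℝ)-1) • δ := by rw [hμdef]; module
          rw [this, he]; module
        rcases hred δ hδΦ p (by rw [← hγp]; exact hγΦ) with h | h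
        · have : p = 1 := by exact_mod_cast h
          omega
        · have : p = -1 := by exact_mod_cast h
          omega
      have hμΦ' : μ ∈ Φ := hΔΦ hμΔ
      have hμp := ip μ hμΦ'
      rcases hp3 with hpe | hpe
      · -- p = 2 : γ = μ + δ, ⟪μ,δ⟫ = 0
        have hγe : γ = μ + δ := by rw [hμdef, hpe]; push_cast; module
        have hμδ0 : ⟪μ,δ⟫ = 0 := by
          rw [hpe] at hp; push_cast at hp
          rw [hγe, inner_add_left] at hp
          linarith
        have hsμγ : sref μ γ = γ - (2:ℝ) • μ := by
          apply hsval μ hμΦ' γ 2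
          rw [hγe, inner_add_left, real_inner_comm μ δ, hμδ0]
          ring
        have hdm : γ - (2:ℝ) • μ = δ - μ := by rw [hγe]; module
        have : δ - μ ∈ Φ := by
          have := hrefl μ hμΦ' γ hγΦ
          rwa [hsμγ, hdm] at this
        exact hsd δ hδΔ μ hμΔ (Ne.symm hμδ) this
      · -- p = 3 : γ = μ + 2δ
        have hγe : γ = μ + (2:ℝ) • δ := by rw [hμdef, hpe]; push_cast; module
        have hμδv : 2*⟪μ,δ⟫ = -⟪δ,δ⟫ := by
          rw [hpe] at hp; push_cast at hp
          rw [hγe, inner_add_left, inner_smul_left] at hp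
          simp at hp
          rw [real_inner_self_eq_norm_sq]
          linarith
        have hγn3 : ⟪γ,γ⟫ = 3*⟪δ,δ⟫ := by rw [hγn, hpe]; push_cast; ring
        have hμn : ⟪μ,μ⟫ = ⟪δ,δ⟫ := by
          have e1 : ⟪γ,γ⟫ = ⟪μ,μ⟫ + 4*⟪μ,δ⟫ + 4*⟪δ,δ⟫ := by
            rw [hγe]
            simp only [inner_add_left, inner_add_right, real_inner_smul_left, real_inner_smul_right]
            rw [real_inner_comm δ μ]
            push_cast
            ring
          rw [hγn3] at e1
          linarith
        -- ζ = δ + μ ∈ Φ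
        have hδμne : δ ≠ -μ := by
          intro he
          rw [he] at hμδv
          simp only [inner_neg_left, inner_neg_right, neg_neg] at hμδv
          linarith [hμp]
        have hδμne2 : δ ≠ μ := fun h => hμδ h.symm
        have hpos2 : 0 < ⟪δ,-μ⟫ := by
          rw [inner_neg_right, real_inner_comm μ δ]
          linarith [hδp, hμδv]
        obtain ⟨_, _, _, _, _, _, _, hζmem⟩ := hkey (-μ) (hnegΦ μ hμΦ') δ hδΦ hδμne
          (by simpa using hδμne2) hpos2
        have hζe : δ - -μ = δ + μ := by module
        rw [hζe] at hζmem
        have hζn : ⟪δ+μ,δ+μ⟫ = ⟪δ,δ⟫ := by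
          simp only [inner_add_left, inner_add_right]
          rw [real_inner_comm μ δ]
          linarith [hμδv, hμn]
        have hγζ : 2*⟪γ,δ+μ⟫ = 3*⟪δ+μ,δ+μ⟫ := by
          rw [hζn, hγe]
          simp only [inner_add_left, inner_add_right, real_inner_smul_left, real_inner_smul_right]
          push_cast
          linarith [hμδv, hμn, real_inner_comm μ δ]
        have hζΦ : δ + μ ∈ Φ := hζmem
        have hsζγ : sref (δ+μ) γ = γ - (3:ℝ) • (δ+μ) := hsval (δ+μ) hζΦ γ 3 hγζ
        have hξmem : γ - (3:ℝ) • (δ+μ) ∈ Φ := by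
          rw [← hsζγ]; exact hrefl (δ+μ) hζΦ γ hγΦ
        have hξe : -(γ - (3:ℝ) • (δ+μ)) = δ + (2:ℝ) • μ := by rw [hγe]; module
        have hξΦ : δ + (2:ℝ) • μ ∈ Φ := by
          rw [← hξe]; exact hnegΦ _ hξmem
        have hξγ : 2*⟪δ + (2:ℝ) • μ, γ⟫ = 1*⟪γ,γ⟫ := by
          rw [hγn3, hγe]
          simp only [inner_add_left, inner_add_right, real_inner_smul_left, real_inner_smul_right]
          rw [real_inner_comm δ μ, real_inner_comm μ δ]
          push_cast
          linarith [hμδv, hμn]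
        have hfin : sref γ (δ + (2:ℝ) • μ) = (δ + (2:ℝ) • μ) - (1:ℝ) • γ := by
          apply hsval γ hγΦ _ 1
          exact hξγ
        have hfin2 : (δ + (2:ℝ) • μ) - (1:ℝ) • γ = μ - δ := by rw [hγe]; module
        have : μ - δ ∈ Φ := by
          have := hrefl γ hγΦ _ hξΦ
          rwa [hfin, hfin2] at this
        exact hsd μ hμΔ δ hδΔ hμδ this
  ------------------------------------------------------------------
  -- Part 7 : the positive case
  ------------------------------------------------------------------
  have hcaseA : ∀ a ∈ Φ, (∀ δ ∈ Δ, 0 ≤ ⟪a,δ⟫) → a = θ ∨ a = θp := by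
    intro a haΦ hadom
    rcases htwo a haΦ hadom with h | h
    · exact Or.inl (huniq a haΦ hadom θ hθΦ hθdom h)
    · exact Or.inr (huniq a haΦ hadom θp hθpΦ hθpdom h)
  have Hpos : ∀ n:ℕ, ∀ a, a ∈ Φ → a ∈ P → F θ - F a ≤ (n:ℝ) →
      (∀ β ∈ Φ, ⟪a + ρ, β⟫ ≠ 0) →
      a = θ ∨ a = θp ∨ ∃ γ ∈ Δ, θp + γ ∈ Φ ∧ a = sref γ (θp + γ) := by
    intro n
    induction n using Nat.strong_induction_on with
    | _ n ih =>
    intro a haΦ haP hFb hrega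
    by_cases hdom : ∀ δ ∈ Δ, 0 ≤ ⟪a,δ⟫
    · rcases hcaseA a haΦ hdom with h | h
      · exact Or.inl h
      · exact Or.inr (Or.inl h)
    push_neg at hdom
    obtain ⟨δ, hδΔ, hlt⟩ := hdom
    have hδΦ : δ ∈ Φ := hΔΦ hδΔ
    have hδp := ip δ hδΦ
    have hap := ip a haΦ
    have haδ : a ≠ δ := by
      intro he; rw [he] at hlt; linarith
    have haδ' : a ≠ -δ := by
      intro he
      have h1 := hFpos a haP (hΦ0 a haΦ)
      rw [he, map_neg, hFδ δ hδΔ] at h1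
      linarith
    have hpos : 0 < ⟪-a, δ⟫ := by rw [inner_neg_left]; linarith
    have hnane : -a ≠ δ := by
      intro he
      apply haδ'
      rw [← he]; module
    have hnane' : -a ≠ -δ := by
      intro he
      apply haδ
      have := congrArg Neg.neg he
      simpa using this
    obtain ⟨p, q, hp1, hq1, hpq, hp, hq, hmema⟩ := hkey δ hδΦ (-a) (hnegΦ a haΦ) hnane hnane' hpos
    rw [inner_neg_left] at hp hq
    simp only [inner_neg_left, inner_neg_right, neg_neg] at hq
    -- hp : 2 * -⟪a,δ⟫ = p * ⟪δ,δ⟫ ; hq : 2 * -⟪a,δ⟫ = q * ⟪a,a⟫ (after cleanup)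
    have hρδ' := hρδ δ hδΔ
    have hp2 : 2 ≤ p := by
      by_contra h2
      push_neg at h2
      have hpe : p = 1 := by omega
      apply hrega δ hδΦ
      rw [inner_add_left]
      rw [hpe] at hp
      push_cast at hp
      linarith
    have hq2 : q = 1 := by
      by_contra hq2'
      have h6 : 2 ≤ q := by omega
      have h7 : (2:ℤ)*2 ≤ p*q := mul_le_mul hp2 h6 (by norm_num) (by omega)
      omega
    rw [hq2, mul_one] at hpq
    have han : ⟪a,a⟫ = (p:ℝ)*⟪δ,δ⟫ := by
      rw [hq2] at hq
      push_cast at hq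
      linarith
    have hp3 : p = 2 ∨ p = 3 := by omega
    have haδv : 2*⟪a,δ⟫ = -(p:ℝ)*⟪δ,δ⟫ := by linarith
    have haδΦ : a + δ ∈ Φ := by
      have he : -a - δ = -(a + δ) := by module
      rw [he] at hmema
      have := hnegΦ _ hmema
      simpa using this
    set μ : V := a + ((p:ℝ)-1) • δ with hμdef
    have hμΦ : μ ∈ Φ := by
      rcases hp3 with hpe | hpe
      · have : μ = a + δ := by rw [hμdef, hpe]; push_cast; module
        rw [this]; exact haδΦ
      · have h1 : 0 < ⟪-(a+δ), δ⟫ := by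
          simp only [inner_neg_left, inner_add_left]
          rw [hpe] at haδv
          push_cast at haδv
          linarith
        have h2 : -(a+δ) ≠ δ := by
          intro he
          have ha2 : a = -((2:ℝ) • δ) := by
            have : a = -δ - δ := by
              have := congrArg Neg.neg he
              simp at this
              rw [← this]; module
            rw [this]; module
          have han4 : ⟪a,a⟫ = 4*⟪δ,δ⟫ := by
            rw [ha2]
            simp only [inner_neg_left, inner_neg_right, real_inner_smul_left, real_inner_smul_right]
            push_cast; ring
          rw [hpe] at han; push_cast at han
          nlinarith
        have h3 : -(a+δ) ≠ -δ := by
          intro he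
          have : a = 0 := by
            have := congrArg Neg.neg he
            simp at this
            rw [← sub_eq_zero]
            rw [this]; module
          exact hΦ0 a haΦ this
        obtain ⟨_, _, _, _, _, _, _, hmem2⟩ := hkey δ hδΦ (-(a+δ)) (hnegΦ _ haδΦ) h2 h3 h1
        have he2 : -(a+δ) - δ = -(a + (2:ℝ) • δ) := by module
        rw [he2] at hmem2
        have := hnegΦ _ hmem2
        simp only [neg_neg] at this
        have he3 : μ = a + (2:ℝ) • δ := by rw [hμdef, hpe]; push_cast; module
        rw [he3]; exact this
    have hμP : μ ∈ P := by
      have hmn : μ = a + ((p-1).toNat) • δ := by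
        rw [hμdef, ← Nat.cast_smul_eq_nsmul ℝ ((p-1).toNat) δ]
        congr 2
        have : (((p-1).toNat : ℤ) : ℝ) = ((p:ℝ) - 1) := by
          rw [Int.toNat_of_nonneg (by omega)]
          push_cast; ring
        exact_mod_cast this.symm
      rw [hmn]
      exact P.add_mem haP (AddSubmonoid.nsmul_mem P (hPmem δ hδΔ) _)
    have hFμ : F μ = F a + ((p:ℝ)-1) := by
      rw [hμdef, map_add, map_smul, hFδ δ hδΔ]
      simp
    have hp2r : (2:ℝ) ≤ p := by exact_mod_cast hp2
    have hn1 : 1 ≤ n := by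
      have h1 := hFle μ hμΦ
      rw [hFμ] at h1
      have : (1:ℝ) ≤ n := by push_cast at hFb ⊢; linarith
      exact_mod_cast this
    have hFμb : F θ - F μ ≤ ((n-1 : ℕ):ℝ) := by
      rw [hFμ]
      push_cast [Nat.cast_sub hn1] at hFb ⊢
      linarith
    have hsρ : sref δ ρ = ρ - (1:ℝ) • δ := hsval δ hδΦ ρ 1 (by rw [hρδ']; ring)
    have hsa : sref δ a = a - (-(p:ℝ)) • δ := hsval δ hδΦ a (-(p:ℝ)) (by rw [haδv])
    have hregμ : ∀ β ∈ Φ, ⟪μ + ρ, β⟫ ≠ 0 := by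
      intro β hβ hzero
      apply hrega (sref δ β) (hrefl δ hδΦ β hβ)
      have hid : sref δ (a + ρ) = μ + ρ := by
        rw [map_add, hsρ, hsa, hμdef]; module
      rw [← sref_inner' δ (a + ρ) β, hid]
      exact hzero
    have hμn : ⟪μ,μ⟫ = ⟪δ,δ⟫ := by
      have e1 : ⟪μ,μ⟫ = ⟪a,a⟫ + ((p:ℝ)-1)*(2*⟪a,δ⟫) + ((p:ℝ)-1)^2*⟪δ,δ⟫ := by
        rw [hμdef]
        simp only [inner_add_left, inner_add_right, real_inner_smul_left, real_inner_smul_right]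
        rw [real_inner_comm δ a]
        push_cast
        ring
      rw [han, haδv] at e1
      rw [e1]; ring
    rcases ih (n-1) (by omega) μ hμΦ hμP hFμb hregμ with hμθ | hμθp | hμform
    · -- μ = θ : impossible
      exfalso
      have h1 := hθtop a haΦ
      rw [← hμθ, hμn] at h1
      nlinarith
    · -- μ = θp : a = sref δ (θp + δ)
      right; right
      refine ⟨δ, hδΔ, ?_, ?_⟩
      · have hsa2 : sref δ a = θp + δ := by
          rw [hsa, ← hμθp, hμdef]; module
        rw [← hsa2]
        exact hrefl δ hδΦ a haΦ
      · have hsa2 : sref δ a = θp + δ := by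
          rw [hsa, ← hμθp, hμdef]; module
        rw [← hsa2, sref_sref']
    · -- μ = sref γ (θp + γ) : impossible
      exfalso
      obtain ⟨γ, hγΔ, hθpγΦ, hμe⟩ := hμform
      have hγΦ' : γ ∈ Φ := hΔΦ hγΔ
      have hγp := ip γ hγΦ'
      have hθpp := ip θp hθpΦ
      have hθpγ0 : 0 ≤ ⟪θp,γ⟫ := hθpdom γ hγΔ
      have hne1 : θp + γ ≠ γ := by
        intro he
        apply hΦ0 θp hθpΦ
        have : θp = θp + γ - γ := by module
        rw [this, he]; module
      have hne2 : θp + γ ≠ -γ := by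
        intro he
        have : θp = -((2:ℝ) • γ) := by
          have : θp = θp + γ - γ := by module
          rw [this, he]; module
        rw [this] at hθpγ0
        simp only [inner_neg_left, real_inner_smul_left] at hθpγ0
        push_cast at hθpγ0
        nlinarith
      have hposg : 0 < ⟪θp + γ, γ⟫ := by
        rw [inner_add_left]
        linarith [hθpγ0, hγp]
      obtain ⟨p2, q2, hp21, hq21, hpq2, hp2', hq2', _⟩ :=
        hkey γ hγΦ' (θp + γ) hθpγΦ hne1 hne2 hposg
      have hp22 : 2 ≤ p2 := by
        have e1 : 2*⟪θp+γ,γ⟫ = 2*⟪θp,γ⟫ + 2*⟪γ,γ⟫ := by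
          rw [inner_add_left]; ring
        by_contra h2
        push_neg at h2
        have hpe : p2 = 1 := by omega
        rw [hpe] at hp2'
        push_cast at hp2'
        nlinarith
      have hq22 : q2 = 1 := by
        by_contra hq2'
        have h6 : 2 ≤ q2 := by omega
        have h7 : (2:ℤ)*2 ≤ p2*q2 := mul_le_mul hp22 h6 (by norm_num) (by omega)
        omega
      have hθpγn : ⟪θp+γ,θp+γ⟫ = (p2:ℝ)*⟪γ,γ⟫ := by
        rw [hq22] at hq2'
        push_cast at hq2'
        linarith
      have hθpn2 : ⟪θp,θp⟫ = ⟪γ,γ⟫ := by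
        have e1 : ⟪θp,θp⟫ = ⟪θp+γ,θp+γ⟫ - 2*⟪θp+γ,γ⟫ + ⟪γ,γ⟫ := by
          simp only [inner_add_left, inner_add_right]
          rw [real_inner_comm γ θp]
          ring
        rw [e1, hθpγn, ← hp2']
        ring
      have hμn2 : ⟪μ,μ⟫ = ⟪θp+γ,θp+γ⟫ := by
        rw [hμe]
        exact sref_inner_self' γ (θp+γ)
      -- ⟪δ,δ⟫ = p2 * ⟪θp,θp⟫ ≥ 2⟪θp,θp⟫ ; ⟪a,a⟫ = p⟪δ,δ⟫ ≥ 4⟪θp,θp⟫ > 3⟪θp,θp⟫ ≥ ⟪θ,θ⟫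
      have hδn : ⟪δ,δ⟫ = (p2:ℝ)*⟪θp,θp⟫ := by
        rw [hθpn2, ← hθpγn, ← hμn2, hμn]
      have hp22r : (2:ℝ) ≤ p2 := by exact_mod_cast hp22
      have h1 := hθtop a haΦ
      nlinarith [hrat]
  ------------------------------------------------------------------
  -- Part 8 : assembly
  ------------------------------------------------------------------
  have hregα : ∀ β ∈ Φ, ⟪α + ρ, β⟫ ≠ 0 := by
    intro β hβ h
    apply hreg β hβ
    rw [cpair, h]
    simp
  have hθpnorm : ∀ β ∈ Φ, ‖θp‖ ≤ ‖β‖ := by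
    intro β hβ
    have h2 : ‖θp‖^2 ≤ ‖β‖^2 := by
      rw [← real_inner_self_eq_norm_sq, ← real_inner_self_eq_norm_sq]
      exact hθpmin β hβ
    nlinarith [norm_nonneg θp, norm_nonneg β]
  have hθpclass : ∀ β ∈ Φ, ‖β‖ = ‖θp‖ → θp - β ∈ P := by
    intro β hβ hn
    apply hclass β hβ
    rw [real_inner_self_eq_norm_sq, real_inner_self_eq_norm_sq, hn]
  rcases hΔgen α hα with hαP | hnαP
  · -- α positive
    have hb : F θ - F α ≤ ((⌈F θ - F α⌉₊ : ℕ):ℝ) := Nat.le_ceil _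
    rcases Hpos ⌈F θ - F α⌉₊ α hα hαP hb hregα with h | h | h
    · exact Or.inl h
    · exact Or.inr (Or.inr ⟨θp, hθpΦ, hθpnorm, hθpclass, Or.inl h⟩)
    · exact Or.inr (Or.inr ⟨θp, hθpΦ, hθpnorm, hθpclass, Or.inr h⟩)
  · -- α negative
    have hnαΦ : -α ∈ Φ := hnegΦ α hα
    have hregn : ∀ β ∈ Φ, ⟪ρ - -α, β⟫ ≠ 0 := by
      intro β hβ
      have : ρ - -α = α + ρ := by module
      rw [this]
      exact hregα β hβ
    have hb : F (-α) ≤ ((⌈F (-α)⌉₊ : ℕ):ℝ) := Nat.le_ceil _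
    have := Hneg ⌈F (-α)⌉₊ (-α) hnαΦ hnαP hb hregn
    exact Or.inr (Or.inl ⟨-α, this, by module⟩)
end
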